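/- Let k be an algebraically closed field of characteristic zero, G a finite group, ε ∈ {+1, −1}, and V a faithful irreducible ε-small finite-dimensional representation of G over k. Let H be a normal subgroup of G not contained in the center Z(G) such that all irreducible H-submodules of V are pairwise isomorphic, but the restriction of V to H is not irreducible. Then dim_k V = 4 and there exist a nondegenerate quadratic form q on V and a group homomorphism λ : G → kˣ such that q(g • v) = λ(g) · q(v) for all g ∈ G and v ∈ V. -/

import Mathlib

open TensorProduct

namespace SmallRep

variable {k G V : Type*}

section Defs
variable [CommSemiring k] [Monoid G] [AddCommMonoid V] [Module k V]

def IsSubrep (ρ : Representation k G V) (W : Submodule k V) : Prop :=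
  ∀ g : G, ∀ v ∈ W, ρ g v ∈ W

def IsIrred (ρ : Representation k G V) : Prop :=
  Nontrivial V ∧ ∀ W : Submodule k V, IsSubrep ρ W → W = ⊥ ∨ W = ⊤

def SubIrred (ρ : Representation k G V) (W : Submodule k V) : Prop :=
  W ≠ ⊥ ∧ ∀ U : Submodule k V, U ≤ W → IsSubrep ρ U → U = ⊥ ∨ U = W

def TrivOn (ρ : Representation k G V) (W : Submodule k V) : Prop :=
  ∀ g : G, ∀ v ∈ W, ρ g v = v

/-- The restriction of `ρ` to an invariant subspace, as a representation on `W`. -/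
def subRep (ρ : Representation k G V) (W : Submodule k V) (hW : IsSubrep ρ W) :
    Representation k G W where
  toFun g := (ρ g).restrict (fun v hv => hW g v hv)
  map_one' := by ext v; simp [LinearMap.restrict_apply]
  map_mul' g₁ g₂ := by
    ext v
    simp [LinearMap.restrict_apply, map_mul, Module.End.mul_apply]

lemma subRep_coe {ρ : Representation k G V} {W : Submodule k V} {hW : IsSubrep ρ W}
    (g : G) (w : W) : (subRep ρ W hW g w : V) = ρ g (w : V) := rfl

/-- Two representations are isomorphic (equivariantly linearly equivalent). -/
def RepIso {W₁ W₂ : Type*} [AddCommMonoid W₁] [Module k W₁] [AddCommMonoid W₂] [Module k W₂]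
    (ρ₁ : Representation k G W₁) (ρ₂ : Representation k G W₂) : Prop :=
  ∃ e : W₁ ≃ₗ[k] W₂, ∀ (g : G) (w : W₁), e (ρ₁ g w) = ρ₂ g (e w)

end Defs

section Chars
variable [CommSemiring k] [Group G] [AddCommMonoid V] [Module k V]

/-- The weight space of a character `χ` of a subgroup `K`. -/
def weightSpace (ρ : Representation k G V) (K : Subgroup G) (χ : K →* kˣ) :
    Submodule k V where
  carrier := {v | ∀ h : K, ρ (h : G) v = (χ h : k) • v}
  add_mem' := by
    intro a b ha hb h
    simp [map_add, ha h, hb h, smul_add]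
  zero_mem' := by intro h; simp
  smul_mem' := by
    intro c a ha h
    rw [map_smul, ha h, smul_comm]

/-- Conjugation action of `G` on characters of a normal subgroup `K`. -/
def conjChar {K : Subgroup G} (hK : K.Normal) (g : G) (χ : K →* kˣ) : K →* kˣ :=
  haveI := hK
  χ.comp (MulAut.conjNormal g⁻¹).toMonoidHom

end Chars

section Tensor
variable [CommRing k] [Group G] [AddCommGroup V] [Module k V]

noncomputable def tau (k V : Type*) [CommRing k] [AddCommGroup V] [Module k V] :
    Module.End k (V ⊗[k] V) :=
  (TensorProduct.comm k V V).toLinearMap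

noncomputable def Tsq (k V : Type*) [CommRing k] [AddCommGroup V] [Module k V] (ε : ℤ) :
    Submodule k (V ⊗[k] V) :=
  Module.End.eigenspace (tau k V) (ε : k)

noncomputable def IsSmall (ρ : Representation k G V) (ε : ℤ) : Prop :=
  (IsSubrep (ρ.tprod ρ) (Tsq k V ε) ∧ SubIrred (ρ.tprod ρ) (Tsq k V ε)) ∨
  ∃ W₁ W₂ : Submodule k (V ⊗[k] V),
    IsSubrep (ρ.tprod ρ) W₁ ∧ IsSubrep (ρ.tprod ρ) W₂ ∧
    Disjoint W₁ W₂ ∧ W₁ ⊔ W₂ = Tsq k V ε ∧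
    SubIrred (ρ.tprod ρ) W₁ ∧ Module.finrank k W₂ = 1 ∧ TrivOn (ρ.tprod ρ) W₂

/-- A representation is very small if both its symmetric and alternating squares
are irreducible. -/
noncomputable def VerySmall (ρ : Representation k G V) : Prop :=
  IsIrred ρ ∧ SubIrred (ρ.tprod ρ) (Tsq k V 1) ∧ SubIrred (ρ.tprod ρ) (Tsq k V (-1))

/-- `ρ` is strongly irreducible. -/
def StronglyIrred (ρ : Representation k G V) : Prop :=
  ∀ H : Subgroup G, H.Normal → H.FiniteIndex → ¬ H ≤ Subgroup.center G →
    IsIrred (ρ.comp H.subtype)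

/-- `ρ` is `2`-homogeneous monomial. -/
def TwoHomogMonomial (ρ : Representation k G V) : Prop :=
  ∃ K : Subgroup G, ∃ hK : K.Normal,
    (∀ x y : K, x * y = y * x) ∧
    (∀ χ : K →* kˣ, Module.finrank k (weightSpace ρ K χ) ≤ 1) ∧
    (⨆ χ : K →* kˣ, weightSpace ρ K χ) = ⊤ ∧
    (∀ χ₁ χ₂ χ₃ χ₄ : K →* kˣ,
      weightSpace ρ K χ₁ ≠ ⊥ → weightSpace ρ K χ₂ ≠ ⊥ →
      weightSpace ρ K χ₃ ≠ ⊥ → weightSpace ρ K χ₄ ≠ ⊥ →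
      χ₁ ≠ χ₂ → χ₃ ≠ χ₄ →
      ∃ g : G, ({conjChar hK g χ₁, conjChar hK g χ₂} : Set (K →* kˣ)) = {χ₃, χ₄}) ∧
    (∀ g : G, (∀ χ : K →* kˣ, weightSpace ρ K χ ≠ ⊥ → conjChar hK g χ = χ) ↔ g ∈ K)

/-- `V` carries a nondegenerate quadratic form with respect to which `G` acts by
similitudes. -/
def QuadSimilitude (ρ : Representation k G V) : Prop :=
  ∃ q : QuadraticForm k V, ∃ lam : G →* kˣ,
    LinearMap.BilinForm.Nondegenerate (QuadraticMap.polarBilin q) ∧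
    ∀ (g : G) (v : V), q (ρ g v) = (lam g : k) * q v

/-- External tensor product of two representations. -/
noncomputable def extTensor {G₁ G₂ W₁ W₂ : Type*} [Group G₁] [Group G₂]
    [AddCommMonoid W₁] [Module k W₁] [AddCommMonoid W₂] [Module k W₂]
    (ρ₁ : Representation k G₁ W₁) (ρ₂ : Representation k G₂ W₂) :
    Representation k (G₁ × G₂) (W₁ ⊗[k] W₂) :=
  Representation.tprod (ρ₁.comp (MonoidHom.fst G₁ G₂)) (ρ₂.comp (MonoidHom.snd G₁ G₂))

end Tensor

section Groups

/-- A finite `p`-group is extraspecial if its center equals its commutator subgroup,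
has order `p`, and the central quotient is a nontrivial elementary abelian `p`-group. -/
def IsExtraspecial (p : ℕ) (E : Type*) [Group E] : Prop :=
  Subgroup.center E = commutator E ∧ Nat.card (Subgroup.center E) = p ∧
  Nontrivial (E ⧸ Subgroup.center E) ∧
  (∀ x y : E ⧸ Subgroup.center E, x * y = y * x) ∧
  (∀ x : E ⧸ Subgroup.center E, x ^ p = 1)

/-- A group is quasisimple if it is perfect and its central quotient is a
non-abelian simple group. -/
def IsQuasisimple (H : Type*) [Group H] : Prop :=
  commutator H = ⊤ ∧ IsSimpleGroup (H ⧸ Subgroup.center H) ∧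
  ∃ x y : H ⧸ Subgroup.center H, x * y ≠ y * x

end Groups


section Aux
set_option linter.unusedSectionVars false

variable [Field k] [CharZero k] [IsAlgClosed k] [AddCommGroup V] [Module k V]
  [FiniteDimensional k V]

variable {Γ : Type*} [Group Γ]

lemma exists_equivariant_proj [Finite Γ] (σ : Representation k Γ V)
    (W : Submodule k V) (hW : IsSubrep σ W) :
    ∃ π : V →ₗ[k] V, (∀ (g : Γ) (v : V), π (σ g v) = σ g (π v)) ∧
      (∀ v : V, π v ∈ W) ∧ (∀ w ∈ W, π w = w) := by
  have : Fintype Γ := Fintype.ofFinite Γ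
  obtain ⟨Y, hY⟩ := Submodule.exists_isCompl W
  set π₀ : V →ₗ[k] V := W.subtype ∘ₗ (W.projectionOnto Y hY) with hπ₀
  have hπ₀W : ∀ v, π₀ v ∈ W := fun v => (W.projectionOnto Y hY v).2
  have hπ₀id : ∀ w ∈ W, π₀ w = w := by
    intro w hw
    simp [hπ₀, Submodule.projectionOnto_apply_left hY ⟨w, hw⟩]
  set c : k := (Fintype.card Γ : k)⁻¹ with hc
  have hcard : (Fintype.card Γ : k) ≠ 0 := by
    exact_mod_cast Nat.cast_ne_zero.mpr Fintype.card_ne_zero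
  refine ⟨c • ∑ g : Γ, σ g ∘ₗ π₀ ∘ₗ σ g⁻¹, ?_, ?_, ?_⟩
  · intro h v
    simp only [LinearMap.smul_apply, LinearMap.coe_sum, Finset.sum_apply,
      LinearMap.comp_apply, map_smul, map_sum]
    congr 1
    calc ∑ g : Γ, σ g (π₀ (σ g⁻¹ (σ h v)))
        = ∑ g : Γ, σ (h*g) (π₀ (σ (h*g)⁻¹ (σ h v))) := by
          exact (Fintype.sum_equiv (Equiv.mulLeft h) _ _ (fun g => rfl)).symm
      _ = ∑ g : Γ, σ h (σ g (π₀ (σ g⁻¹ v))) := by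
          refine Finset.sum_congr rfl fun g _ => ?_
          have h1 : σ (h*g)⁻¹ (σ h v) = σ g⁻¹ v := by
            rw [← Module.End.mul_apply, ← map_mul]
            congr 1
            group
          have h2 : σ (h*g) = σ h * σ g := by rw [map_mul]
          rw [h1, h2]
          rfl
  · intro v
    simp only [LinearMap.smul_apply, LinearMap.coe_sum, Finset.sum_apply,
      LinearMap.comp_apply]
    refine Submodule.smul_mem _ _ (Submodule.sum_mem _ fun g _ => ?_)
    exact hW g _ (hπ₀W _)
  · intro w hw
    simp only [LinearMap.smul_apply, LinearMap.coe_sum, Finset.sum_apply,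
      LinearMap.comp_apply]
    have : ∀ g : Γ, σ g (π₀ (σ g⁻¹ w)) = w := by
      intro g
      rw [hπ₀id _ (hW g⁻¹ w hw), ← Module.End.mul_apply, ← map_mul]
      simp
    rw [Finset.sum_congr rfl (fun g _ => this g)]
    simp only [Finset.sum_const, Finset.card_univ]
    rw [← Nat.cast_smul_eq_nsmul k, smul_smul, inv_mul_cancel₀ hcard, one_smul]

lemma exists_subIrred_le (σ : Representation k Γ V) :
    ∀ (n : ℕ) (X : Submodule k V), Module.finrank k X ≤ n → IsSubrep σ X → X ≠ ⊥ →
    ∃ W : Submodule k V, W ≤ X ∧ IsSubrep σ W ∧ SubIrred σ W := by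
  intro n
  induction n with
  | zero =>
    intro X hn hsub hne
    exact absurd (Submodule.finrank_eq_zero.mp (Nat.le_zero.mp hn)) hne
  | succ n ih =>
    intro X hn hsub hne
    by_cases hmin : ∀ U : Submodule k V, U ≤ X → IsSubrep σ U → U = ⊥ ∨ U = X
    · exact ⟨X, le_refl X, hsub, hne, hmin⟩
    · push_neg at hmin
      obtain ⟨U, hUX, hUsub, hU0, hUne⟩ := hmin
      have hlt : U < X := lt_of_le_of_ne hUX hUne
      have : Module.finrank k U ≤ n := by
        have := Submodule.finrank_lt_finrank_of_lt hlt
        omega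
      obtain ⟨W, hWU, h1, h2⟩ := ih U this hUsub hU0
      exact ⟨W, le_trans hWU hUX, h1, h2⟩


lemma subirr_subRep_cases (σ : Representation k Γ V) (W₀ : Submodule k V)
    (hsub₀ : IsSubrep σ W₀) (hirr₀ : SubIrred σ W₀) :
    ∀ Z : Submodule k ↥W₀, IsSubrep (subRep σ W₀ hsub₀) Z → Z = ⊥ ∨ Z = ⊤ := by
  intro Z hZ
  have h1 : IsSubrep σ (Z.map W₀.subtype) := by
    intro g v hv
    obtain ⟨z, hz, rfl⟩ := Submodule.mem_map.mp hv
    exact Submodule.mem_map.mpr ⟨subRep σ W₀ hsub₀ g z, hZ g z hz, rfl⟩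
  have h2 : Z.map W₀.subtype ≤ W₀ := Submodule.map_subtype_le _ _
  have hinj := Submodule.map_injective_of_injective (Submodule.injective_subtype W₀)
  rcases hirr₀.2 _ h2 h1 with h | h
  · left
    apply hinj
    rw [h, Submodule.map_bot]
  · right
    apply hinj
    rw [h, Submodule.map_subtype_top]

lemma decomp_aux [Finite Γ] (σ : Representation k Γ V) (W₀ : Submodule k V)
    (hsub₀ : IsSubrep σ W₀)
    (hiso₀ : ∀ W : Submodule k V, IsSubrep σ W → SubIrred σ W →
      ∃ φ : ↥W₀ →ₗ[k] V, Function.Injective φ ∧ LinearMap.range φ = W ∧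
        ∀ (g : Γ) (w : ↥W₀), φ (subRep σ W₀ hsub₀ g w) = σ g (φ w)) :
    ∀ (n : ℕ) (X : Submodule k V), Module.finrank k X ≤ n → IsSubrep σ X →
    ∃ (m : ℕ) (L : (Fin m → ↥W₀) →ₗ[k] V),
      (∀ (g : Γ) (f : Fin m → ↥W₀), L (fun i => subRep σ W₀ hsub₀ g (f i)) = σ g (L f)) ∧
      Function.Injective L ∧ LinearMap.range L = X := by
  have base : ∃ (L : (Fin 0 → ↥W₀) →ₗ[k] V),
      (∀ (g : Γ) (f : Fin 0 → ↥W₀), L (fun i => subRep σ W₀ hsub₀ g (f i)) = σ g (L f)) ∧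
      Function.Injective L ∧ LinearMap.range L = ⊥ := by
    refine ⟨0, by simp, Function.injective_of_subsingleton _, LinearMap.range_zero⟩
  intro n
  induction n with
  | zero =>
    intro X hn hsub
    have hX : X = ⊥ := Submodule.finrank_eq_zero.mp (Nat.le_zero.mp hn)
    subst hX
    exact ⟨0, base⟩
  | succ n ih =>
    intro X hn hsubX
    by_cases hne : X = ⊥
    · subst hne; exact ⟨0, base⟩
    obtain ⟨W', hW'X, hW'sub, hW'irr⟩ := exists_subIrred_le σ (n+1) X hn hsubX hne
    obtain ⟨φ₀, hφ₀inj, hφ₀rg, hφ₀eqv⟩ := hiso₀ W' hW'sub hW'irr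
    obtain ⟨π, hπeqv, hπW, hπid⟩ := exists_equivariant_proj σ W' hW'sub
    set X' : Submodule k V := X ⊓ LinearMap.ker π with hX'
    have hX'sub : IsSubrep σ X' := by
      intro g v hv
      refine ⟨hsubX g v hv.1, ?_⟩
      have hker : π v = 0 := hv.2
      show π (σ g v) = 0
      rw [hπeqv g v, hker, map_zero]
    have hWX'bot : W' ⊓ X' = ⊥ := by
      rw [eq_bot_iff]
      rintro v ⟨hvW, -, hvK⟩
      have h1 : π v = v := hπid v hvW
      have h2 : π v = 0 := hvK
      rw [Submodule.mem_bot, ← h1, h2]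
    have hsupX : W' ⊔ X' = X := by
      apply le_antisymm (sup_le hW'X inf_le_left)
      intro x hx
      rw [Submodule.mem_sup]
      refine ⟨π x, hπW x, x - π x, ⟨Submodule.sub_mem X hx (hW'X (hπW x)), ?_⟩, by abel⟩
      show π (x - π x) = 0
      rw [map_sub, hπid (π x) (hπW x), sub_self]
    have hW'ne : W' ≠ ⊥ := hW'irr.1
    have hX'leX : X' ≤ X := inf_le_left
    have hX'lt : X' < X := by
      refine lt_of_le_of_ne hX'leX ?_
      intro h
      apply hW'ne
      rw [← hWX'bot, h]
      exact (inf_eq_left.mpr hW'X).symm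
    have hX'rank : Module.finrank k X' ≤ n := by
      have := Submodule.finrank_lt_finrank_of_lt hX'lt
      omega
    obtain ⟨m, L, hLeqv, hLinj, hLrg⟩ := ih X' hX'rank hX'sub
    refine ⟨m + 1, φ₀ ∘ₗ LinearMap.proj 0 + L ∘ₗ LinearMap.funLeft k ↥W₀ Fin.succ, ?_, ?_, ?_⟩
    · intro g f
      show φ₀ (subRep σ W₀ hsub₀ g (f 0)) + L ((fun i => subRep σ W₀ hsub₀ g (f i)) ∘ Fin.succ)
          = σ g (φ₀ (f 0) + L (f ∘ Fin.succ))
      rw [map_add, hφ₀eqv g (f 0)]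
      congr 1
      exact hLeqv g (f ∘ Fin.succ)
    · rw [← LinearMap.ker_eq_bot, eq_bot_iff]
      intro f hf
      have hf' : φ₀ (f 0) + L (f ∘ Fin.succ) = 0 := hf
      have ha : φ₀ (f 0) ∈ W' := by
        rw [← hφ₀rg]; exact LinearMap.mem_range_self φ₀ (f 0)
      have hb : L (f ∘ Fin.succ) ∈ X' := by
        rw [← hLrg]; exact LinearMap.mem_range_self L _
      have hmem : φ₀ (f 0) ∈ W' ⊓ X' := by
        refine ⟨ha, ?_⟩
        have h2 : φ₀ (f 0) = -(L (f ∘ Fin.succ)) := by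
          rw [eq_neg_iff_add_eq_zero]; exact hf'
        rw [h2]
        exact Submodule.neg_mem _ hb
      rw [hWX'bot, Submodule.mem_bot] at hmem
      have hf0 : f 0 = 0 := hφ₀inj (by rw [hmem, map_zero])
      have hLz : L (f ∘ Fin.succ) = 0 := by
        have h3 := hf'
        rw [hmem, zero_add] at h3
        exact h3
      have hfs : f ∘ Fin.succ = 0 := hLinj (by rw [hLz, map_zero])
      rw [Submodule.mem_bot]
      funext i
      refine Fin.cases ?_ ?_ i
      · exact hf0
      · intro j
        exact congrFun hfs j
    · apply le_antisymm
      · rintro v ⟨f, rfl⟩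
        show φ₀ (f 0) + L (f ∘ Fin.succ) ∈ X
        apply Submodule.add_mem
        · apply hW'X
          rw [← hφ₀rg]; exact LinearMap.mem_range_self φ₀ (f 0)
        · apply hX'leX
          rw [← hLrg]; exact LinearMap.mem_range_self L _
      · intro x hx
        rw [← hsupX] at hx
        obtain ⟨a, ha, b, hb, rfl⟩ := Submodule.mem_sup.mp hx
        rw [← hφ₀rg] at ha
        obtain ⟨w, rfl⟩ := ha
        rw [← hLrg] at hb
        obtain ⟨t, rfl⟩ := hb
        refine ⟨Fin.cons w t, ?_⟩
        have hct : (Fin.cons w t : Fin (m+1) → ↥W₀) ∘ Fin.succ = t := by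
          funext i; rw [Function.comp_apply, Fin.cons_succ]
        have hgoal : φ₀ ((Fin.cons w t : Fin (m+1) → ↥W₀) 0)
            + L ((Fin.cons w t : Fin (m+1) → ↥W₀) ∘ Fin.succ) = φ₀ w + L t := by
          rw [Fin.cons_zero, hct]
        exact hgoal


lemma decomp [Finite Γ] (σ : Representation k Γ V) (W₀ : Submodule k V)
    (hsub₀ : IsSubrep σ W₀)
    (hiso₀ : ∀ W : Submodule k V, IsSubrep σ W → SubIrred σ W →
      ∃ φ : ↥W₀ →ₗ[k] V, Function.Injective φ ∧ LinearMap.range φ = W ∧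
        ∀ (g : Γ) (w : ↥W₀), φ (subRep σ W₀ hsub₀ g w) = σ g (φ w)) :
    ∃ (m : ℕ) (Φ : (↥W₀ ⊗[k] (Fin m → k)) ≃ₗ[k] V),
      ∀ (g : Γ) (w : ↥W₀) (f : Fin m → k),
        Φ ((subRep σ W₀ hsub₀ g w) ⊗ₜ[k] f) = σ g (Φ (w ⊗ₜ[k] f)) := by
  obtain ⟨m, L, hLeqv, hLinj, hLrg⟩ := decomp_aux σ W₀ hsub₀ hiso₀ (Module.finrank k V) ⊤
    (by rw [finrank_top]) (fun g v _ => Submodule.mem_top)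
  have hLbij : Function.Bijective L := ⟨hLinj, LinearMap.range_eq_top.mp hLrg⟩
  set E := TensorProduct.piScalarRight k k ↥W₀ (Fin m) with hE
  refine ⟨m, E.trans (LinearEquiv.ofBijective L hLbij), ?_⟩
  intro g w f
  have key : ∀ w : ↥W₀, (E.trans (LinearEquiv.ofBijective L hLbij)) (w ⊗ₜ[k] f)
      = L (fun i => f i • w) := by
    intro w
    rw [LinearEquiv.trans_apply]
    have h1 : E (w ⊗ₜ[k] f) = fun i => f i • w := by
      rw [hE, TensorProduct.piScalarRight_apply, TensorProduct.piScalarRightHom_tmul]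
    rw [h1]
    rfl
  rw [key, key]
  have h2 : (fun i => f i • subRep σ W₀ hsub₀ g w)
      = fun i => subRep σ W₀ hsub₀ g (f i • w) := by
    funext i; rw [map_smul]
  rw [h2]
  exact hLeqv g (fun i => f i • w)

lemma fin_one_tensor {W : Type*} [AddCommGroup W] [Module k W]
    (x : W ⊗[k] (Fin 1 → k)) : ∃ w : W, x = w ⊗ₜ[k] (fun _ => (1:k)) := by
  induction x with
  | zero => exact ⟨0, by rw [TensorProduct.zero_tmul]⟩
  | tmul w f =>
    refine ⟨f 0 • w, ?_⟩
    rw [TensorProduct.smul_tmul]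
    congr 1
    funext i
    have : i = 0 := Subsingleton.elim i 0
    rw [this]
    simp
  | add x y hx hy =>
    obtain ⟨w₁, rfl⟩ := hx
    obtain ⟨w₂, rfl⟩ := hy
    exact ⟨w₁ + w₂, by rw [TensorProduct.add_tmul]⟩

lemma irred_of_fin_one (σ : Representation k Γ V) (W₀ : Submodule k V)
    (hsub₀ : IsSubrep σ W₀) (hirr₀ : SubIrred σ W₀) (hnt : Nontrivial V)
    (Φ : (↥W₀ ⊗[k] (Fin 1 → k)) ≃ₗ[k] V)
    (hΦ : ∀ (g : Γ) (w : ↥W₀) (f : Fin 1 → k),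
      Φ ((subRep σ W₀ hsub₀ g w) ⊗ₜ[k] f) = σ g (Φ (w ⊗ₜ[k] f))) :
    IsIrred σ := by
  refine ⟨hnt, fun Y hY => ?_⟩
  set f₀ : Fin 1 → k := fun _ => (1:k) with hf₀
  set J : ↥W₀ →ₗ[k] V :=
    Φ.toLinearMap ∘ₗ ((TensorProduct.mk k ↥W₀ (Fin 1 → k)).flip f₀) with hJ
  have hJapp : ∀ w, J w = Φ (w ⊗ₜ[k] f₀) := fun w => rfl
  have hsurj : ∀ v : V, ∃ w, J w = v := by
    intro v
    obtain ⟨w, hw⟩ := fin_one_tensor (Φ.symm v)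
    refine ⟨w, ?_⟩
    rw [hJapp, ← hw, Φ.apply_symm_apply]
  set Z : Submodule k ↥W₀ := Y.comap J with hZ
  have hZsub : IsSubrep (subRep σ W₀ hsub₀) Z := by
    intro g w hw
    show J (subRep σ W₀ hsub₀ g w) ∈ Y
    rw [hJapp, hΦ g w f₀, ← hJapp]
    exact hY g _ hw
  rcases subirr_subRep_cases σ W₀ hsub₀ hirr₀ Z hZsub with h | h
  · left
    rw [eq_bot_iff]
    intro v hv
    obtain ⟨w, rfl⟩ := hsurj v
    have : w ∈ Z := hv
    rw [h, Submodule.mem_bot] at this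
    rw [this, map_zero]
    exact Submodule.zero_mem ⊥
  · right
    rw [eq_top_iff]
    intro v _
    obtain ⟨w, rfl⟩ := hsurj v
    have : w ∈ Z := by rw [h]; trivial
    exact this

lemma schur_scalar (σ : Representation k Γ V) (W₀ : Submodule k V)
    (hsub₀ : IsSubrep σ W₀) (hirr₀ : SubIrred σ W₀)
    (f : Module.End k ↥W₀)
    (hcomm : ∀ g : Γ, f ∘ₗ (subRep σ W₀ hsub₀ g) = (subRep σ W₀ hsub₀ g) ∘ₗ f) :
    ∃ c : k, f = c • (LinearMap.id : Module.End k ↥W₀) := by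
  have hnt : Nontrivial ↥W₀ := Submodule.nontrivial_iff_ne_bot.mpr hirr₀.1
  obtain ⟨c, hc⟩ := Module.End.exists_eigenvalue f
  refine ⟨c, ?_⟩
  set K : Submodule k ↥W₀ := Module.End.eigenspace f c with hK
  have hKne : K ≠ ⊥ := hc
  have hKsub : IsSubrep (subRep σ W₀ hsub₀) K := by
    intro g x hx
    rw [hK, Module.End.mem_eigenspace_iff] at hx ⊢
    have := congrFun (congrArg (fun (u : Module.End k ↥W₀) => (u : ↥W₀ → ↥W₀)) (hcomm g)) x
    simp only [LinearMap.comp_apply] at this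
    rw [this, hx, map_smul]
  rcases subirr_subRep_cases σ W₀ hsub₀ hirr₀ K hKsub with h | h
  · exact absurd h hKne
  · refine LinearMap.ext fun x => ?_
    have hx : x ∈ K := by rw [h]; trivial
    rw [hK, Module.End.mem_eigenspace_iff] at hx
    simpa using hx

lemma comm_block {m : ℕ} (σ : Representation k Γ V) (W₀ : Submodule k V)
    (hsub₀ : IsSubrep σ W₀) (hirr₀ : SubIrred σ W₀)
    (T : Module.End k (↥W₀ ⊗[k] (Fin m → k)))
    (hT : ∀ g : Γ, T ∘ₗ (TensorProduct.map (subRep σ W₀ hsub₀ g) LinearMap.id)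
       = (TensorProduct.map (subRep σ W₀ hsub₀ g) LinearMap.id) ∘ₗ T) :
    ∃ C : Module.End k (Fin m → k), T = TensorProduct.map LinearMap.id C := by
  set E := TensorProduct.piScalarRight k k ↥W₀ (Fin m) with hE
  set π : Fin m → (↥W₀ ⊗[k] (Fin m → k)) →ₗ[k] ↥W₀ :=
    fun i => (LinearMap.proj i) ∘ₗ E.toLinearMap with hπ
  set ι : Fin m → ↥W₀ →ₗ[k] (↥W₀ ⊗[k] (Fin m → k)) :=
    fun j => (TensorProduct.mk k ↥W₀ (Fin m → k)).flip (Pi.single j 1) with hι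
  have hπtmul : ∀ (i : Fin m) (w : ↥W₀) (f : Fin m → k), π i (w ⊗ₜ[k] f) = f i • w := by
    intro i w f
    rw [hπ]
    simp only [LinearMap.comp_apply, LinearEquiv.coe_coe, hE,
      TensorProduct.piScalarRight_apply, TensorProduct.piScalarRightHom_tmul]
    rfl
  have hιapp : ∀ (j : Fin m) (w : ↥W₀), ι j w = w ⊗ₜ[k] (Pi.single j 1) := fun j w => rfl
  -- reconstruction
  have hsing : ∀ (i : Fin m) (a : k), (Pi.single i a : Fin m → k) = a • (Pi.single i 1 : Fin m → k) := by
    intro i a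
    funext j
    simp only [Pi.single_apply, Pi.smul_apply, smul_eq_mul]
    split <;> simp
  have hrecon : ∀ x : ↥W₀ ⊗[k] (Fin m → k), x = ∑ i, ι i (π i x) := by
    have hid : (LinearMap.id : Module.End k (↥W₀ ⊗[k] (Fin m → k))) = ∑ i, (ι i) ∘ₗ (π i) := by
      apply TensorProduct.ext'
      intro w f
      simp only [LinearMap.id_apply, LinearMap.coe_sum, Finset.sum_apply,
        LinearMap.comp_apply]
      calc w ⊗ₜ[k] f = w ⊗ₜ[k] (∑ i, Pi.single i (f i)) := by rw [Finset.univ_sum_single]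
        _ = ∑ i, w ⊗ₜ[k] Pi.single i (f i) := by rw [TensorProduct.tmul_sum]
        _ = ∑ i, ι i (π i (w ⊗ₜ[k] f)) := by
            refine Finset.sum_congr rfl fun i _ => ?_
            rw [hπtmul, hιapp, hsing i (f i), ← TensorProduct.smul_tmul]
    intro x
    have hx := LinearMap.congr_fun hid x
    simpa [LinearMap.sum_apply, LinearMap.comp_apply] using hx
  -- blocks are scalars
  have hblock : ∀ i j : Fin m, ∃ c : k,
      (π i) ∘ₗ T ∘ₗ (ι j) = c • (LinearMap.id : Module.End k ↥W₀) := by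
    intro i j
    apply schur_scalar σ W₀ hsub₀ hirr₀
    intro g
    have hπeqv : (π i) ∘ₗ (TensorProduct.map (subRep σ W₀ hsub₀ g) LinearMap.id)
        = (subRep σ W₀ hsub₀ g) ∘ₗ (π i) := by
      apply TensorProduct.ext'
      intro w f
      simp only [LinearMap.comp_apply, TensorProduct.map_tmul, LinearMap.id_apply,
        hπtmul, map_smul]
    have hιeqv : (TensorProduct.map (subRep σ W₀ hsub₀ g) LinearMap.id) ∘ₗ (ι j)
        = (ι j) ∘ₗ (subRep σ W₀ hsub₀ g) := by
      apply LinearMap.ext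
      intro w
      simp only [LinearMap.comp_apply, hιapp, TensorProduct.map_tmul, LinearMap.id_apply]
    apply LinearMap.ext
    intro w
    show π i (T (ι j (subRep σ W₀ hsub₀ g w))) = subRep σ W₀ hsub₀ g (π i (T (ι j w)))
    have e1 : ι j (subRep σ W₀ hsub₀ g w)
        = TensorProduct.map (subRep σ W₀ hsub₀ g) LinearMap.id (ι j w) :=
      (LinearMap.congr_fun hιeqv w).symm
    have e2 : T (TensorProduct.map (subRep σ W₀ hsub₀ g) LinearMap.id (ι j w))
        = TensorProduct.map (subRep σ W₀ hsub₀ g) LinearMap.id (T (ι j w)) :=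
      LinearMap.congr_fun (hT g) (ι j w)
    have e3 : π i (TensorProduct.map (subRep σ W₀ hsub₀ g) LinearMap.id (T (ι j w)))
        = subRep σ W₀ hsub₀ g (π i (T (ι j w))) :=
      LinearMap.congr_fun hπeqv (T (ι j w))
    rw [e1, e2, e3]
  choose c hc using hblock
  refine ⟨Matrix.toLin' (Matrix.of (fun i j => c i j)), ?_⟩
  apply TensorProduct.ext'
  intro w f
  have hdec : w ⊗ₜ[k] f = ∑ j, f j • (w ⊗ₜ[k] (Pi.single j 1 : Fin m → k)) := by
    calc w ⊗ₜ[k] f = w ⊗ₜ[k] (∑ j, Pi.single j (f j)) := by rw [Finset.univ_sum_single]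
      _ = ∑ j, w ⊗ₜ[k] Pi.single j (f j) := by rw [TensorProduct.tmul_sum]
      _ = ∑ j, f j • (w ⊗ₜ[k] (Pi.single j 1 : Fin m → k)) := by
          refine Finset.sum_congr rfl fun j _ => ?_
          rw [hsing j (f j), TensorProduct.tmul_smul]
  have hTι : ∀ j, T (w ⊗ₜ[k] (Pi.single j 1 : Fin m → k))
      = ∑ i, (c i j • w) ⊗ₜ[k] (Pi.single i 1 : Fin m → k) := by
    intro j
    rw [← hιapp, hrecon (T (ι j w))]
    refine Finset.sum_congr rfl fun i _ => ?_
    have : π i (T (ι j w)) = c i j • w := by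
      have := congrFun (congrArg (fun (u : ↥W₀ →ₗ[k] ↥W₀) => (u : ↥W₀ → ↥W₀)) (hc i j)) w
      simpa using this
    rw [this, hιapp]
  have hCsingle : ∀ j, Matrix.toLin' (Matrix.of (fun i j => c i j)) (Pi.single j 1 : Fin m → k)
      = fun i => c i j := by
    intro j
    rw [Matrix.toLin'_apply, Matrix.mulVec_single]
    funext i
    simp
  rw [hdec, map_sum, map_sum]
  refine Finset.sum_congr rfl fun j _ => ?_
  rw [map_smul, map_smul, hTι j, TensorProduct.map_tmul, LinearMap.id_apply, hCsingle j]
  congr 1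
  calc ∑ i, (c i j • w) ⊗ₜ[k] (Pi.single i 1 : Fin m → k)
      = ∑ i, w ⊗ₜ[k] Pi.single i (c i j) := by
        refine Finset.sum_congr rfl fun i _ => ?_
        rw [hsing i (c i j), ← TensorProduct.smul_tmul]
    _ = w ⊗ₜ[k] (∑ i, Pi.single i (c i j)) := by rw [TensorProduct.tmul_sum]
    _ = w ⊗ₜ[k] (fun i => c i j) := by rw [Finset.univ_sum_single (fun i => c i j)]

variable {G' : Type*} [Group G']

/-- `ρ g` as a linear equivalence. -/
def repEquiv (ρ : Representation k G' V) (g : G') : V ≃ₗ[k] V :=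
  LinearEquiv.ofLinear (ρ g) (ρ g⁻¹)
    (by
      ext v
      simp only [LinearMap.comp_apply, LinearMap.id_apply, ← Module.End.mul_apply, ← map_mul,
        mul_inv_cancel, map_one, Module.End.one_apply])
    (by
      ext v
      simp only [LinearMap.comp_apply, LinearMap.id_apply, ← Module.End.mul_apply, ← map_mul,
        inv_mul_cancel, map_one, Module.End.one_apply])

lemma repEquiv_apply (ρ : Representation k G' V) (g : G') (v : V) :
    repEquiv ρ g v = ρ g v := rfl

lemma isSubrep_map_rho (ρ : Representation k G' V) (H : Subgroup G') (hH : H.Normal)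
    (X : Submodule k V) (hX : IsSubrep (ρ.comp H.subtype) X) (g : G') :
    IsSubrep (ρ.comp H.subtype) (X.map (ρ g : V →ₗ[k] V)) := by
  rintro h v hv
  obtain ⟨x, hx, rfl⟩ := Submodule.mem_map.mp hv
  have hmem : (g⁻¹ * ↑h * g) ∈ H := by
    have := hH.conj_mem ↑h h.2 g⁻¹
    rwa [inv_inv] at this
  have key : (ρ.comp H.subtype) h (ρ g x) = ρ g ((ρ.comp H.subtype) ⟨g⁻¹ * ↑h * g, hmem⟩ x) := by
    show ρ ↑h (ρ g x) = ρ g (ρ (g⁻¹ * ↑h * g) x)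
    rw [← Module.End.mul_apply, ← map_mul, ← Module.End.mul_apply, ← map_mul]
    congr 2
    group
  rw [key]
  exact Submodule.mem_map.mpr ⟨_, hX ⟨g⁻¹ * ↑h * g, hmem⟩ x hx, rfl⟩

lemma subIrred_map_rho (ρ : Representation k G' V) (H : Subgroup G') (hH : H.Normal)
    (X : Submodule k V) (hXsub : IsSubrep (ρ.comp H.subtype) X)
    (hXirr : SubIrred (ρ.comp H.subtype) X) (g : G') :
    SubIrred (ρ.comp H.subtype) (X.map (ρ g : V →ₗ[k] V)) := by
  constructor
  · intro hbot
    apply hXirr.1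
    rw [eq_bot_iff]
    intro x hx
    have h1 : ρ g x ∈ X.map (ρ g : V →ₗ[k] V) := Submodule.mem_map.mpr ⟨x, hx, rfl⟩
    rw [hbot, Submodule.mem_bot] at h1
    have : x = ρ g⁻¹ (ρ g x) := by
      rw [← Module.End.mul_apply, ← map_mul, inv_mul_cancel, map_one, Module.End.one_apply]
    rw [Submodule.mem_bot, this, h1, map_zero]
  · intro U hUle hUsub
    have hmapmap : ∀ (Y : Submodule k V) (a : G'),
        (Y.map (ρ a : V →ₗ[k] V)).map (ρ a⁻¹ : V →ₗ[k] V) = Y := by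
      intro Y a
      rw [← Submodule.map_comp]
      have : (ρ a⁻¹ : V →ₗ[k] V) ∘ₗ (ρ a : V →ₗ[k] V) = LinearMap.id := by
        ext v
        simp only [LinearMap.comp_apply, LinearMap.id_apply, ← Module.End.mul_apply, ← map_mul,
          inv_mul_cancel, map_one, Module.End.one_apply]
      rw [this, Submodule.map_id]
    have hU' : U.map (ρ g⁻¹ : V →ₗ[k] V) ≤ X := by
      intro u hu
      obtain ⟨x, hx, rfl⟩ := Submodule.mem_map.mp hu
      have := hUle hx
      obtain ⟨y, hy, rfl⟩ := Submodule.mem_map.mp this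
      have : ρ g⁻¹ (ρ g y) = y := by
        rw [← Module.End.mul_apply, ← map_mul, inv_mul_cancel, map_one, Module.End.one_apply]
      rwa [this]
    rcases hXirr.2 (U.map (ρ g⁻¹ : V →ₗ[k] V)) hU' (isSubrep_map_rho ρ H hH U hUsub g⁻¹) with h | h
    · left
      have := congrArg (fun Y => Submodule.map (ρ g : V →ₗ[k] V) Y) h
      simp only [Submodule.map_bot] at this
      rw [← this]
      have h2 := hmapmap U g⁻¹
      rw [inv_inv] at h2
      rw [h2]
    · right
      have := congrArg (fun Y => Submodule.map (ρ g : V →ₗ[k] V) Y) h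
      have h2 := hmapmap U g⁻¹
      rw [inv_inv] at h2
      rw [h2] at this
      rw [this]

lemma rho_factor (ρ : Representation k G' V) (H : Subgroup G') (hH : H.Normal)
    (W₀ : Submodule k V) (hsub₀ : IsSubrep (ρ.comp H.subtype) W₀)
    (hirr₀ : SubIrred (ρ.comp H.subtype) W₀)
    (hiso₀ : ∀ W : Submodule k V, IsSubrep (ρ.comp H.subtype) W →
        SubIrred (ρ.comp H.subtype) W →
      ∃ φ : ↥W₀ →ₗ[k] V, Function.Injective φ ∧ LinearMap.range φ = W ∧
        ∀ (h : ↥H) (w : ↥W₀), φ (subRep (ρ.comp H.subtype) W₀ hsub₀ h w)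
          = (ρ.comp H.subtype) h (φ w))
    {m : ℕ} (Φ : (↥W₀ ⊗[k] (Fin m → k)) ≃ₗ[k] V)
    (hΦ : ∀ (h : ↥H), Φ.toLinearMap ∘ₗ
        (TensorProduct.map (subRep (ρ.comp H.subtype) W₀ hsub₀ h) LinearMap.id)
        = ((ρ.comp H.subtype) h : V →ₗ[k] V) ∘ₗ Φ.toLinearMap)
    (g : G') :
    ∃ (β : Module.End k ↥W₀) (C : Module.End k (Fin m → k)),
      Φ.symm.toLinearMap ∘ₗ (ρ g : V →ₗ[k] V) ∘ₗ Φ.toLinearMap = TensorProduct.map β C := by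
  set σ := ρ.comp H.subtype with hσ
  set ρW := subRep σ W₀ hsub₀ with hρW
  -- the translated irreducible submodule
  set W₁ : Submodule k V := W₀.map (ρ g⁻¹ : V →ₗ[k] V) with hW₁
  have hW₁sub : IsSubrep σ W₁ := isSubrep_map_rho ρ H hH W₀ hsub₀ g⁻¹
  have hW₁irr : SubIrred σ W₁ := subIrred_map_rho ρ H hH W₀ hsub₀ hirr₀ g⁻¹
  obtain ⟨φ₁, hφ₁inj, hφ₁rg, hφ₁eqv⟩ := hiso₀ W₁ hW₁sub hW₁irr
  -- β : w ↦ ρ g (φ₁ w), corestricted to W₀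
  have hβmem : ∀ w : ↥W₀, ρ g (φ₁ w) ∈ W₀ := by
    intro w
    have h1 : φ₁ w ∈ W₁ := by rw [← hφ₁rg]; exact LinearMap.mem_range_self φ₁ w
    obtain ⟨y, hy, h2⟩ := Submodule.mem_map.mp h1
    rw [← h2, ← Module.End.mul_apply, ← map_mul, mul_inv_cancel, map_one, Module.End.one_apply]
    exact hy
  set β : Module.End k ↥W₀ :=
    LinearMap.codRestrict W₀ ((ρ g : V →ₗ[k] V) ∘ₗ φ₁) hβmem with hβ
  have hβval : ∀ w : ↥W₀, (β w : V) = ρ g (φ₁ w) := fun w => rfl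
  have hβinj : Function.Injective β := by
    intro a b hab
    have : ρ g (φ₁ a) = ρ g (φ₁ b) := by
      rw [← hβval, ← hβval, hab]
    have h2 : φ₁ a = φ₁ b := (repEquiv ρ g).injective this
    exact hφ₁inj h2
  have hβsurj : Function.Surjective β := by
    intro w
    have h1 : ρ g⁻¹ (w : V) ∈ W₁ := Submodule.mem_map.mpr ⟨w, w.2, rfl⟩
    rw [← hφ₁rg] at h1
    obtain ⟨u, hu⟩ := h1
    refine ⟨u, ?_⟩
    apply Subtype.ext
    rw [hβval, hu, ← Module.End.mul_apply, ← map_mul, mul_inv_cancel, map_one,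
      Module.End.one_apply]
  -- conjugated element of H
  have hconjmem : ∀ h : ↥H, g * ↑h * g⁻¹ ∈ H := fun h => hH.conj_mem ↑h h.2 g
  have hβeqv : ∀ (h : ↥H) (w : ↥W₀),
      β (ρW h w) = ρW ⟨g * ↑h * g⁻¹, hconjmem h⟩ (β w) := by
    intro h w
    apply Subtype.ext
    rw [hβval]
    have h1 : φ₁ (ρW h w) = ρ ↑h (φ₁ w) := hφ₁eqv h w
    rw [h1]
    show ρ g (ρ ↑h (φ₁ w)) = ρ (g * ↑h * g⁻¹) (ρ g (φ₁ w))
    rw [← Module.End.mul_apply, ← map_mul, ← Module.End.mul_apply, ← map_mul]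
    congr 2
    group
  set βe : ↥W₀ ≃ₗ[k] ↥W₀ := LinearEquiv.ofBijective β ⟨hβinj, hβsurj⟩ with hβe
  -- R = Φ⁻¹ ρ(g) Φ
  set R : Module.End k (↥W₀ ⊗[k] (Fin m → k)) :=
    Φ.symm.toLinearMap ∘ₗ (ρ g : V →ₗ[k] V) ∘ₗ Φ.toLinearMap with hR
  have hΦid : Φ.symm.toLinearMap ∘ₗ Φ.toLinearMap = LinearMap.id := by
    apply LinearMap.ext
    intro x
    simp only [LinearMap.comp_apply, LinearEquiv.coe_coe, LinearEquiv.symm_apply_apply,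
      LinearMap.id_apply]
  have hΦinv : ∀ h : ↥H, TensorProduct.map (ρW h) LinearMap.id
      = Φ.symm.toLinearMap ∘ₗ (σ h : V →ₗ[k] V) ∘ₗ Φ.toLinearMap := by
    intro h
    rw [← hΦ h, ← LinearMap.comp_assoc, hΦid, LinearMap.id_comp]
  have hcomm : ∀ h : ↥H,
      R ∘ₗ TensorProduct.map (ρW h) LinearMap.id
      = TensorProduct.map (ρW ⟨g * ↑h * g⁻¹, hconjmem h⟩) LinearMap.id ∘ₗ R := by
    intro h
    rw [hΦinv h, hΦinv ⟨g * ↑h * g⁻¹, hconjmem h⟩, hR]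
    apply LinearMap.ext
    intro x
    simp only [LinearMap.comp_apply, LinearEquiv.coe_coe, LinearEquiv.apply_symm_apply]
    congr 1
    show ρ g (ρ ↑h (Φ x)) = ρ (g * ↑h * g⁻¹) (ρ g (Φ x))
    rw [← Module.End.mul_apply, ← map_mul, ← Module.End.mul_apply, ← map_mul]
    congr 2
    group
  -- T = (β⁻¹ ⊗ 1) R commutes with all ρW h ⊗ 1
  set T : Module.End k (↥W₀ ⊗[k] (Fin m → k)) :=
    TensorProduct.map βe.symm.toLinearMap LinearMap.id ∘ₗ R with hT
  have hβinv : ∀ h : ↥H, βe.symm.toLinearMap ∘ₗ (ρW ⟨g * ↑h * g⁻¹, hconjmem h⟩ : Module.End k ↥W₀)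
      = (ρW h : Module.End k ↥W₀) ∘ₗ βe.symm.toLinearMap := by
    intro h
    apply LinearMap.ext
    intro w
    have e1 : β (ρW h (βe.symm w)) = ρW ⟨g * ↑h * g⁻¹, hconjmem h⟩ (β (βe.symm w)) :=
      hβeqv h (βe.symm w)
    have e2 : β (βe.symm w) = w := βe.apply_symm_apply w
    rw [e2] at e1
    show βe.symm (ρW ⟨g * ↑h * g⁻¹, hconjmem h⟩ w) = ρW h (βe.symm w)
    apply βe.injective
    rw [βe.apply_symm_apply]
    exact e1.symm
  have hTcomm : ∀ h : ↥H, T ∘ₗ TensorProduct.map (ρW h) LinearMap.id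
      = TensorProduct.map (ρW h) LinearMap.id ∘ₗ T := by
    intro h
    rw [hT, LinearMap.comp_assoc, hcomm h, ← LinearMap.comp_assoc,
      ← TensorProduct.map_comp, hβinv h, TensorProduct.map_comp, LinearMap.comp_assoc]
  obtain ⟨C, hC⟩ := comm_block σ W₀ hsub₀ hirr₀ T hTcomm
  refine ⟨βe.toLinearMap, C, ?_⟩
  have h1 : TensorProduct.map βe.toLinearMap LinearMap.id ∘ₗ T = R := by
    rw [hT, ← LinearMap.comp_assoc, ← TensorProduct.map_comp]
    have h2 : βe.toLinearMap ∘ₗ βe.symm.toLinearMap = LinearMap.id := by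
      apply LinearMap.ext
      intro w
      simp only [LinearMap.comp_apply, LinearEquiv.coe_coe, LinearEquiv.apply_symm_apply,
        LinearMap.id_apply]
    have h3 : (LinearMap.id : Module.End k (Fin m → k)) ∘ₗ LinearMap.id = LinearMap.id := rfl
    rw [h2, h3, TensorProduct.map_id, LinearMap.id_comp]
  rw [← h1, hC, ← TensorProduct.map_comp, LinearMap.comp_id, LinearMap.id_comp]

section TensorSq

variable {M N P Q Z : Type*} [AddCommGroup M] [Module k M] [AddCommGroup N] [Module k N]
  [AddCommGroup P] [Module k P] [AddCommGroup Q] [Module k Q] [AddCommGroup Z] [Module k Z]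

lemma ext_four {f g : ((M ⊗[k] N) ⊗[k] (P ⊗[k] Q)) →ₗ[k] Z}
    (h : ∀ m n p q, f ((m ⊗ₜ[k] n) ⊗ₜ[k] (p ⊗ₜ[k] q)) = g ((m ⊗ₜ[k] n) ⊗ₜ[k] (p ⊗ₜ[k] q))) :
    f = g := by
  apply TensorProduct.ext'
  intro a b
  induction a with
  | zero => rw [TensorProduct.zero_tmul, map_zero, map_zero]
  | tmul m n =>
    induction b with
    | zero => rw [TensorProduct.tmul_zero, map_zero, map_zero]
    | tmul p q => exact h m n p q
    | add b₁ b₂ h₁ h₂ => rw [TensorProduct.tmul_add, map_add, map_add, h₁, h₂]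
  | add a₁ a₂ h₁ h₂ => rw [TensorProduct.add_tmul, map_add, map_add, h₁, h₂]

lemma tau_tmul (x y : M) : tau k M (x ⊗ₜ[k] y) = y ⊗ₜ[k] x := rfl

lemma tau_tau (x : M ⊗[k] M) : tau k M (tau k M x) = x := by
  induction x with
  | zero => rw [map_zero, map_zero]
  | tmul a b => rw [tau_tmul, tau_tmul]
  | add a b ha hb => rw [map_add, map_add, ha, hb]

/-- Symmetrizer. -/
noncomputable def pP (M : Type*) [AddCommGroup M] [Module k M] :
    Module.End k (M ⊗[k] M) := (2:k)⁻¹ • (LinearMap.id + tau k M)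

/-- Antisymmetrizer. -/
noncomputable def pM (M : Type*) [AddCommGroup M] [Module k M] :
    Module.End k (M ⊗[k] M) := (2:k)⁻¹ • (LinearMap.id - tau k M)

lemma pP_apply (x : M ⊗[k] M) : pP (k := k) M x = (2:k)⁻¹ • (x + tau k M x) := rfl
lemma pM_apply (x : M ⊗[k] M) : pM (k := k) M x = (2:k)⁻¹ • (x - tau k M x) := rfl

lemma tau_pP (x : M ⊗[k] M) : tau k M (pP (k := k) M x) = pP (k := k) M x := by
  rw [pP_apply, map_smul, map_add, tau_tau, add_comm]

lemma tau_pM (x : M ⊗[k] M) : tau k M (pM (k := k) M x) = -(pM (k := k) M x) := by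
  rw [pM_apply, map_smul, map_sub, tau_tau, ← smul_neg, neg_sub]

lemma pP_of_fixed {x : M ⊗[k] M} (h : tau k M x = x) : pP (k := k) M x = x := by
  rw [pP_apply, h, ← two_smul k x, smul_smul,
    inv_mul_cancel₀ (two_ne_zero' k), one_smul]

lemma pM_of_anti {x : M ⊗[k] M} (h : tau k M x = -x) : pM (k := k) M x = x := by
  rw [pM_apply, h, sub_neg_eq_add, ← two_smul k x, smul_smul,
    inv_mul_cancel₀ (two_ne_zero' k), one_smul]

lemma pP_of_anti {x : M ⊗[k] M} (h : tau k M x = -x) : pP (k := k) M x = 0 := by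
  rw [pP_apply, h, add_neg_cancel, smul_zero]

lemma pM_of_fixed {x : M ⊗[k] M} (h : tau k M x = x) : pM (k := k) M x = 0 := by
  rw [pM_apply, h, sub_self, smul_zero]

lemma pP_pP : pP (k := k) M ∘ₗ pP (k := k) M = pP (k := k) M :=
  LinearMap.ext fun x => pP_of_fixed (tau_pP x)

lemma pM_pM : pM (k := k) M ∘ₗ pM (k := k) M = pM (k := k) M :=
  LinearMap.ext fun x => pM_of_anti (tau_pM x)

lemma pP_pM : pP (k := k) M ∘ₗ pM (k := k) M = 0 :=
  LinearMap.ext fun x => pP_of_anti (tau_pM x)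

lemma pM_pP : pM (k := k) M ∘ₗ pP (k := k) M = 0 :=
  LinearMap.ext fun x => pM_of_fixed (tau_pP x)

lemma pP_add_pM (x : M ⊗[k] M) : pP (k := k) M x + pM (k := k) M x = x := by
  rw [pP_apply, pM_apply, ← smul_add]
  have : x + tau k M x + (x - tau k M x) = (2:k) • x := by
    rw [two_smul]; abel
  rw [this, smul_smul, inv_mul_cancel₀ (two_ne_zero' k), one_smul]

lemma pP_tau (x : M ⊗[k] M) : pP (k := k) M (tau k M x) = pP (k := k) M x := by
  rw [pP_apply, tau_tau, pP_apply, add_comm]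

lemma pM_tau (x : M ⊗[k] M) : pM (k := k) M (tau k M x) = -(pM (k := k) M x) := by
  rw [pM_apply, tau_tau, pM_apply, ← smul_neg, neg_sub]

/-- Any operator of the form `β ⊗ β` commutes with the swap, hence with the projectors. -/
lemma mapbb_tau (β : Module.End k M) :
    TensorProduct.map β β ∘ₗ tau k M = tau k M ∘ₗ TensorProduct.map β β := by
  apply TensorProduct.ext'
  intro x y
  simp only [LinearMap.comp_apply, tau_tmul, TensorProduct.map_tmul]

lemma mapbb_pP (β : Module.End k M) :
    TensorProduct.map β β ∘ₗ pP (k := k) M = pP (k := k) M ∘ₗ TensorProduct.map β β := by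
  apply LinearMap.ext
  intro x
  show TensorProduct.map β β (pP (k := k) M x) = pP (k := k) M (TensorProduct.map β β x)
  rw [pP_apply, map_smul, map_add, pP_apply]
  congr 2
  exact LinearMap.congr_fun (mapbb_tau β) x

lemma mapbb_pM (β : Module.End k M) :
    TensorProduct.map β β ∘ₗ pM (k := k) M = pM (k := k) M ∘ₗ TensorProduct.map β β := by
  apply LinearMap.ext
  intro x
  show TensorProduct.map β β (pM (k := k) M x) = pM (k := k) M (TensorProduct.map β β x)
  rw [pM_apply, map_smul, map_sub, pM_apply]
  congr 2
  exact LinearMap.congr_fun (mapbb_tau β) x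

lemma mem_range_idem {P' : Module.End k Z} (hP : P' ∘ₗ P' = P') {x : Z} :
    x ∈ LinearMap.range P' ↔ P' x = x := by
  constructor
  · rintro ⟨y, rfl⟩
    exact LinearMap.congr_fun hP y
  · intro h
    exact ⟨x, h⟩

end TensorSq

section Theta

variable {W U : Type*} [AddCommGroup W] [Module k W] [AddCommGroup U] [Module k U]

/-- The regrouping equivalence `(W⊗W)⊗(U⊗U) ≃ (W⊗U)⊗(W⊗U) ≃ V ⊗ V`. -/
noncomputable def Theta (Φ : (W ⊗[k] U) ≃ₗ[k] V) : ((W ⊗[k] W) ⊗[k] (U ⊗[k] U)) ≃ₗ[k] V ⊗[k] V :=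
  (TensorProduct.tensorTensorTensorComm k W U W U).symm.trans (TensorProduct.congr Φ Φ)

lemma Theta_tmul (Φ : (W ⊗[k] U) ≃ₗ[k] V) (w₁ w₂ : W) (u₁ u₂ : U) :
    Theta Φ ((w₁ ⊗ₜ[k] w₂) ⊗ₜ[k] (u₁ ⊗ₜ[k] u₂)) = Φ (w₁ ⊗ₜ[k] u₁) ⊗ₜ[k] Φ (w₂ ⊗ₜ[k] u₂) := by
  have h1 : (TensorProduct.tensorTensorTensorComm k W U W U).symm
      ((w₁ ⊗ₜ[k] w₂) ⊗ₜ[k] (u₁ ⊗ₜ[k] u₂)) = (w₁ ⊗ₜ[k] u₁) ⊗ₜ[k] (w₂ ⊗ₜ[k] u₂) := by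
    rw [LinearEquiv.symm_apply_eq]
    exact (TensorProduct.tensorTensorTensorComm_tmul k w₁ u₁ w₂ u₂).symm
  rw [Theta, LinearEquiv.trans_apply, h1, TensorProduct.congr_tmul]

lemma tau_Theta (Φ : (W ⊗[k] U) ≃ₗ[k] V) :
    (tau k V) ∘ₗ (Theta Φ).toLinearMap
      = (Theta Φ).toLinearMap ∘ₗ (TensorProduct.map (tau k W) (tau k U)) := by
  apply ext_four
  intro w₁ w₂ u₁ u₂
  simp only [LinearMap.comp_apply, LinearEquiv.coe_coe, TensorProduct.map_tmul]
  rw [Theta_tmul, tau_tmul, tau_tmul, tau_tmul, Theta_tmul]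

lemma conj_Theta (Φ : (W ⊗[k] U) ≃ₗ[k] V) (S : Module.End k V)
    (β : Module.End k W) (C : Module.End k U)
    (hS : Φ.symm.toLinearMap ∘ₗ S ∘ₗ Φ.toLinearMap = TensorProduct.map β C) :
    (TensorProduct.map S S) ∘ₗ (Theta Φ).toLinearMap
      = (Theta Φ).toLinearMap ∘ₗ
        (TensorProduct.map (TensorProduct.map β β) (TensorProduct.map C C)) := by
  have hS' : ∀ x : W ⊗[k] U, S (Φ x) = Φ (TensorProduct.map β C x) := by
    intro x
    have := LinearMap.congr_fun hS x
    simp only [LinearMap.comp_apply, LinearEquiv.coe_coe] at this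
    rw [← this, Φ.apply_symm_apply]
  apply ext_four
  intro w₁ w₂ u₁ u₂
  simp only [LinearMap.comp_apply, LinearEquiv.coe_coe, TensorProduct.map_tmul]
  rw [Theta_tmul, Theta_tmul, TensorProduct.map_tmul, hS', hS']
  simp only [TensorProduct.map_tmul]

end Theta

section Bound

lemma finrank_pos_of_ne_bot {A : Submodule k V} (h : A ≠ ⊥) : 1 ≤ Module.finrank k A := by
  by_contra hc
  push_neg at hc
  exact h (Submodule.finrank_eq_zero.mp (by omega))

lemma small_bound {G' : Type*} [Group G'] (ρ : Representation k G' V) (ε : ℤ)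
    (hsmall : IsSmall ρ ε)
    (A B : Submodule k (V ⊗[k] V))
    (hA : IsSubrep (ρ.tprod ρ) A) (hB : IsSubrep (ρ.tprod ρ) B)
    (hdisj : A ⊓ B = ⊥) (hsup : A ⊔ B = Tsq k V ε)
    (hBne : B ≠ ⊥) (hA2 : 2 ≤ Module.finrank k A) :
    Module.finrank k B = 1 := by
  have hAle : A ≤ Tsq k V ε := hsup ▸ le_sup_left
  have hBle : B ≤ Tsq k V ε := hsup ▸ le_sup_right
  have hAne : A ≠ ⊥ := by
    intro h
    rw [h, finrank_bot] at hA2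
    omega
  have hfAB : Module.finrank k A + Module.finrank k B = Module.finrank k (Tsq k V ε) := by
    have := Submodule.finrank_sup_add_finrank_inf_eq A B
    rw [hdisj, hsup, finrank_bot, add_zero] at this
    exact this.symm
  rcases hsmall with ⟨hTsub, hTirr⟩ | ⟨W₁, W₂, hW₁sub, hW₂sub, hdisj', hsup', hW₁irr, hW₂rk, -⟩
  · rcases hTirr.2 A hAle hA with h | h
    · exact absurd h hAne
    · exfalso
      apply hBne
      have hBA : B ≤ A := h ▸ hBle
      rw [← hdisj, inf_eq_right.mpr hBA]
  · have hdisj'2 : W₁ ⊓ W₂ = ⊥ := disjoint_iff.mp hdisj'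
    have hfIT : Module.finrank k W₁ + 1 = Module.finrank k (Tsq k V ε) := by
      have := Submodule.finrank_sup_add_finrank_inf_eq W₁ W₂
      rw [hdisj'2, hsup', finrank_bot, add_zero, hW₂rk] at this
      exact this.symm
    have hIA := hW₁irr.2 (W₁ ⊓ A) inf_le_left (fun g v hv => ⟨hW₁sub g v hv.1, hA g v hv.2⟩)
    have hIB := hW₁irr.2 (W₁ ⊓ B) inf_le_left (fun g v hv => ⟨hW₁sub g v hv.1, hB g v hv.2⟩)
    have hBpos : 1 ≤ Module.finrank k B := finrank_pos_of_ne_bot hBne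
    rcases hIA with hIA | hIA <;> rcases hIB with hIB | hIB
    · -- both trivial intersections : finrank A ≤ 1, contradiction
      exfalso
      have hIle : W₁ ≤ Tsq k V ε := hsup' ▸ le_sup_left
      have hsupIA : W₁ ⊔ A ≤ Tsq k V ε := sup_le hIle hAle
      have h1 : Module.finrank k W₁ + Module.finrank k A
          = Module.finrank k ↥(W₁ ⊔ A) := by
        have := Submodule.finrank_sup_add_finrank_inf_eq W₁ A
        rw [hIA, finrank_bot, add_zero] at this
        exact this.symm
      have h2 : Module.finrank k ↥(W₁ ⊔ A) ≤ Module.finrank k (Tsq k V ε) :=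
        Submodule.finrank_mono hsupIA
      omega
    · -- W₁ ≤ B : finrank A ≤ 1, contradiction
      exfalso
      have hIB' : W₁ ≤ B := inf_eq_left.mp hIB
      have h1 : Module.finrank k W₁ ≤ Module.finrank k B := Submodule.finrank_mono hIB'
      omega
    · -- W₁ ≤ A : conclude finrank B = 1
      have hIA' : W₁ ≤ A := inf_eq_left.mp hIA
      have h1 : Module.finrank k W₁ ≤ Module.finrank k A := Submodule.finrank_mono hIA'
      omega
    · -- W₁ ≤ A and W₁ ≤ B : W₁ = ⊥, contradiction
      exfalso
      apply hW₁irr.1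
      have h1 : W₁ ≤ A ⊓ B := le_inf (inf_eq_left.mp hIA) (inf_eq_left.mp hIB)
      rw [hdisj] at h1
      exact le_bot_iff.mp h1

end Bound

section MkP

variable {W U : Type*} [AddCommGroup W] [Module k W] [AddCommGroup U] [Module k U]

/-- Conjugate of `f ⊗ g` acting on `V ⊗ V` through `Θ`. -/
noncomputable def mkP (Φ : (W ⊗[k] U) ≃ₗ[k] V) (f : Module.End k (W ⊗[k] W))
    (g : Module.End k (U ⊗[k] U)) : Module.End k (V ⊗[k] V) :=
  (Theta Φ).toLinearMap ∘ₗ TensorProduct.map f g ∘ₗ (Theta Φ).symm.toLinearMap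

lemma mkP_apply (Φ : (W ⊗[k] U) ≃ₗ[k] V) (f : Module.End k (W ⊗[k] W))
    (g : Module.End k (U ⊗[k] U)) (x : V ⊗[k] V) :
    mkP Φ f g x = Theta Φ (TensorProduct.map f g ((Theta Φ).symm x)) := rfl

lemma mkP_theta (Φ : (W ⊗[k] U) ≃ₗ[k] V) (f : Module.End k (W ⊗[k] W))
    (g : Module.End k (U ⊗[k] U)) (z : (W ⊗[k] W) ⊗[k] (U ⊗[k] U)) :
    mkP Φ f g (Theta Φ z) = Theta Φ (TensorProduct.map f g z) := by
  rw [mkP_apply, LinearEquiv.symm_apply_apply]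

lemma mkP_comp (Φ : (W ⊗[k] U) ≃ₗ[k] V) (f f' : Module.End k (W ⊗[k] W))
    (g g' : Module.End k (U ⊗[k] U)) :
    mkP Φ f g ∘ₗ mkP Φ f' g' = mkP Φ (f ∘ₗ f') (g ∘ₗ g') := by
  apply LinearMap.ext
  intro x
  show mkP Φ f g (mkP Φ f' g' x) = _
  rw [mkP_apply Φ f' g', mkP_theta, mkP_apply]
  congr 1
  exact (LinearMap.congr_fun (TensorProduct.map_comp f g f' g') ((Theta Φ).symm x)).symm

lemma mkP_smul_left (Φ : (W ⊗[k] U) ≃ₗ[k] V) (a : k) (f : Module.End k (W ⊗[k] W))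
    (g : Module.End k (U ⊗[k] U)) : mkP Φ (a • f) g = a • mkP Φ f g := by
  apply LinearMap.ext
  intro x
  rw [mkP_apply, TensorProduct.map_smul_left]
  show Theta Φ (a • TensorProduct.map f g ((Theta Φ).symm x)) = _
  rw [map_smul]
  rfl

lemma mkP_smul_right (Φ : (W ⊗[k] U) ≃ₗ[k] V) (a : k) (f : Module.End k (W ⊗[k] W))
    (g : Module.End k (U ⊗[k] U)) : mkP Φ f (a • g) = a • mkP Φ f g := by
  apply LinearMap.ext
  intro x
  rw [mkP_apply, TensorProduct.map_smul_right]
  show Theta Φ (a • TensorProduct.map f g ((Theta Φ).symm x)) = _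
  rw [map_smul]
  rfl

lemma tau_comp_mkP (Φ : (W ⊗[k] U) ≃ₗ[k] V) (f : Module.End k (W ⊗[k] W))
    (g : Module.End k (U ⊗[k] U)) :
    tau k V ∘ₗ mkP Φ f g = mkP Φ (tau k W ∘ₗ f) (tau k U ∘ₗ g) := by
  apply LinearMap.ext
  intro x
  show tau k V (mkP Φ f g x) = mkP Φ (tau k W ∘ₗ f) (tau k U ∘ₗ g) x
  rw [mkP_apply, mkP_apply]
  have h1 := LinearMap.congr_fun (tau_Theta Φ) (TensorProduct.map f g ((Theta Φ).symm x))
  simp only [LinearMap.comp_apply, LinearEquiv.coe_coe] at h1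
  rw [h1]
  congr 1
  exact (LinearMap.congr_fun (TensorProduct.map_comp (tau k W) (tau k U) f g)
    ((Theta Φ).symm x)).symm

lemma mkP_comp_tau (Φ : (W ⊗[k] U) ≃ₗ[k] V) (f : Module.End k (W ⊗[k] W))
    (g : Module.End k (U ⊗[k] U)) :
    mkP Φ f g ∘ₗ tau k V = mkP Φ (f ∘ₗ tau k W) (g ∘ₗ tau k U) := by
  have hsymm : (Theta Φ).symm.toLinearMap ∘ₗ tau k V
      = TensorProduct.map (tau k W) (tau k U) ∘ₗ (Theta Φ).symm.toLinearMap := by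
    apply LinearMap.ext
    intro x
    apply (Theta Φ).injective
    have h1 := LinearMap.congr_fun (tau_Theta Φ) ((Theta Φ).symm x)
    simp only [LinearMap.comp_apply, LinearEquiv.coe_coe] at h1 ⊢
    rw [LinearEquiv.apply_symm_apply, ← h1, LinearEquiv.apply_symm_apply]
  apply LinearMap.ext
  intro x
  show mkP Φ f g (tau k V x) = mkP Φ (f ∘ₗ tau k W) (g ∘ₗ tau k U) x
  rw [mkP_apply, mkP_apply]
  have h2 := LinearMap.congr_fun hsymm x
  simp only [LinearMap.comp_apply, LinearEquiv.coe_coe] at h2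
  rw [h2]
  congr 1
  exact (LinearMap.congr_fun (TensorProduct.map_comp f g (tau k W) (tau k U))
    ((Theta Φ).symm x)).symm

lemma comp_mkP_of_conj (Φ : (W ⊗[k] U) ≃ₗ[k] V) (S : Module.End k V)
    (β : Module.End k W) (C : Module.End k U)
    (hS : Φ.symm.toLinearMap ∘ₗ S ∘ₗ Φ.toLinearMap = TensorProduct.map β C)
    (f : Module.End k (W ⊗[k] W)) (g : Module.End k (U ⊗[k] U)) :
    TensorProduct.map S S ∘ₗ mkP Φ f g
      = mkP Φ (TensorProduct.map β β ∘ₗ f) (TensorProduct.map C C ∘ₗ g) := by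
  apply LinearMap.ext
  intro x
  show TensorProduct.map S S (mkP Φ f g x) = _
  rw [mkP_apply, mkP_apply]
  have h1 := LinearMap.congr_fun (conj_Theta Φ S β C hS)
    (TensorProduct.map f g ((Theta Φ).symm x))
  simp only [LinearMap.comp_apply, LinearEquiv.coe_coe] at h1
  rw [h1]
  congr 1
  exact (LinearMap.congr_fun
    (TensorProduct.map_comp (TensorProduct.map β β) (TensorProduct.map C C) f g)
    ((Theta Φ).symm x)).symm

lemma mkP_comp_of_conj (Φ : (W ⊗[k] U) ≃ₗ[k] V) (S : Module.End k V)
    (β : Module.End k W) (C : Module.End k U)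
    (hS : Φ.symm.toLinearMap ∘ₗ S ∘ₗ Φ.toLinearMap = TensorProduct.map β C)
    (f : Module.End k (W ⊗[k] W)) (g : Module.End k (U ⊗[k] U)) :
    mkP Φ f g ∘ₗ TensorProduct.map S S
      = mkP Φ (f ∘ₗ TensorProduct.map β β) (g ∘ₗ TensorProduct.map C C) := by
  have hsymm : (Theta Φ).symm.toLinearMap ∘ₗ TensorProduct.map S S
      = TensorProduct.map (TensorProduct.map β β) (TensorProduct.map C C)
          ∘ₗ (Theta Φ).symm.toLinearMap := by
    apply LinearMap.ext
    intro x
    apply (Theta Φ).injective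
    have h1 := LinearMap.congr_fun (conj_Theta Φ S β C hS) ((Theta Φ).symm x)
    simp only [LinearMap.comp_apply, LinearEquiv.coe_coe] at h1 ⊢
    rw [LinearEquiv.apply_symm_apply, ← h1, LinearEquiv.apply_symm_apply]
  apply LinearMap.ext
  intro x
  show mkP Φ f g (TensorProduct.map S S x) = _
  rw [mkP_apply, mkP_apply]
  have h2 := LinearMap.congr_fun hsymm x
  simp only [LinearMap.comp_apply, LinearEquiv.coe_coe] at h2
  rw [h2]
  congr 1
  exact (LinearMap.congr_fun (TensorProduct.map_comp f g (TensorProduct.map β β)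
    (TensorProduct.map C C)) ((Theta Φ).symm x)).symm

lemma pP_add_pM_eq_id : pP (k := k) W + pM (k := k) W = LinearMap.id :=
  LinearMap.ext fun x => pP_add_pM x

lemma mkP_four_sum (Φ : (W ⊗[k] U) ≃ₗ[k] V) :
    mkP Φ (pP (k := k) W) (pP (k := k) U) + mkP Φ (pM (k := k) W) (pM (k := k) U)
      + mkP Φ (pP (k := k) W) (pM (k := k) U) + mkP Φ (pM (k := k) W) (pP (k := k) U)
      = LinearMap.id := by
  apply LinearMap.ext
  intro x
  have hXid : TensorProduct.map (pP (k := k) W) (pP (k := k) U)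
      + TensorProduct.map (pM (k := k) W) (pM (k := k) U)
      + TensorProduct.map (pP (k := k) W) (pM (k := k) U)
      + TensorProduct.map (pM (k := k) W) (pP (k := k) U) = LinearMap.id := by
    have h1 : TensorProduct.map (pP (k := k) W + pM (k := k) W)
        (pP (k := k) U + pM (k := k) U) = LinearMap.id := by
      rw [pP_add_pM_eq_id, pP_add_pM_eq_id, TensorProduct.map_id]
    rw [TensorProduct.map_add_left, TensorProduct.map_add_right,
      TensorProduct.map_add_right] at h1
    rw [← h1]
    abel
  show mkP Φ (pP (k := k) W) (pP (k := k) U) x + mkP Φ (pM (k := k) W) (pM (k := k) U) x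
      + mkP Φ (pP (k := k) W) (pM (k := k) U) x + mkP Φ (pM (k := k) W) (pP (k := k) U) x
      = x
  simp only [mkP_apply]
  rw [← map_add, ← map_add, ← map_add]
  have h2 := LinearMap.congr_fun hXid ((Theta Φ).symm x)
  simp only [LinearMap.add_apply, LinearMap.id_apply] at h2
  rw [h2, LinearEquiv.apply_symm_apply]

/-- Pairing of two functionals on a tensor product. -/
noncomputable def dual2 {M N : Type*} [AddCommGroup M] [Module k M] [AddCommGroup N]
    [Module k N] (f : M →ₗ[k] k) (g : N →ₗ[k] k) : (M ⊗[k] N) →ₗ[k] k :=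
  (TensorProduct.lid k k).toLinearMap ∘ₗ TensorProduct.map f g

lemma dual2_tmul {M N : Type*} [AddCommGroup M] [Module k M] [AddCommGroup N]
    [Module k N] (f : M →ₗ[k] k) (g : N →ₗ[k] k) (a : M) (b : N) :
    dual2 f g (a ⊗ₜ[k] b) = f a * g b := by
  simp only [dual2, LinearMap.comp_apply, TensorProduct.map_tmul, LinearEquiv.coe_coe,
    TensorProduct.lid_tmul, smul_eq_mul]

lemma li_of_dual {ι Y : Type*} [Fintype ι] [DecidableEq ι] [AddCommGroup Y] [Module k Y]
    (x : ι → Y) (D : ι → (Y →ₗ[k] k))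
    (h : ∀ i j, D i (x j) = if i = j then 1 else 0) : LinearIndependent k x := by
  rw [linearIndependent_iff']
  intro s c hc i hi
  have h1 := congrArg (D i) hc
  rw [map_sum, map_zero] at h1
  have h2 : ∀ j ∈ s, D i (c j • x j) = if j = i then c j else 0 := by
    intro j _
    rw [map_smul, h i j, smul_eq_mul]
    by_cases hij : i = j
    · subst hij; simp
    · simp [hij, Ne.symm hij]
  rw [Finset.sum_congr rfl h2, Finset.sum_ite_eq' s i (fun j => c j), if_pos hi] at h1
  exact h1

lemma two_le_finrank_of_li {Z : Type*} [AddCommGroup Z] [Module k Z] [FiniteDimensional k Z]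
    {A : Submodule k Z} {x y : Z} (hx : x ∈ A) (hy : y ∈ A)
    (h : LinearIndependent k (fun i : Fin 2 => if i = 0 then x else y)) :
    2 ≤ Module.finrank k A := by
  have hv : LinearIndependent k (fun i : Fin 2 =>
      (if i = 0 then (⟨x, hx⟩ : A) else ⟨y, hy⟩)) := by
    apply LinearIndependent.of_comp A.subtype
    have : (A.subtype ∘ fun i : Fin 2 => (if i = 0 then (⟨x, hx⟩ : A) else ⟨y, hy⟩))
        = fun i : Fin 2 => if i = 0 then x else y := by
      funext i
      by_cases hi : i = 0 <;> simp [hi]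
    rw [this]
    exact h
  have := hv.fintype_card_le_finrank
  simpa using this

end MkP

section TsqChar

variable {W U : Type*} [AddCommGroup W] [Module k W] [AddCommGroup U] [Module k U]

lemma tau_comp_pP : tau k W ∘ₗ pP (k := k) W = pP (k := k) W :=
  LinearMap.ext fun x => tau_pP x

lemma tau_comp_pM : tau k W ∘ₗ pM (k := k) W = (-1 : k) • pM (k := k) W :=
  LinearMap.ext fun x => by
    show tau k W (pM (k := k) W x) = ((-1 : k) • pM (k := k) W) x
    rw [tau_pM, LinearMap.smul_apply, neg_one_smul]

lemma pP_comp_tau : pP (k := k) W ∘ₗ tau k W = pP (k := k) W :=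
  LinearMap.ext fun x => pP_tau x

lemma pM_comp_tau : pM (k := k) W ∘ₗ tau k W = (-1 : k) • pM (k := k) W :=
  LinearMap.ext fun x => by
    show pM (k := k) W (tau k W x) = ((-1 : k) • pM (k := k) W) x
    rw [pM_tau, LinearMap.smul_apply, neg_one_smul]

lemma range_inf_eq_bot {Z : Type*} [AddCommGroup Z] [Module k Z] {P Q : Module.End k Z}
    (hP : P ∘ₗ P = P) (hPQ : P ∘ₗ Q = 0) :
    LinearMap.range P ⊓ LinearMap.range Q = ⊥ := by
  rw [eq_bot_iff]
  rintro x ⟨hx1, hx2⟩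
  obtain ⟨z, hz⟩ := hx2
  obtain ⟨y, rfl⟩ := hx1
  rw [Submodule.mem_bot]
  have h1 : P (P y) = P y := LinearMap.congr_fun hP y
  have h2 : P (Q z) = 0 := LinearMap.congr_fun hPQ z
  rw [← h1, ← hz, h2]

lemma smul_cancel_two {Z : Type*} [AddCommGroup Z] [Module k Z] {a : Z}
    (h : a = (-1 : k) • a) : a = 0 := by
  have h2 : a + a = 0 := by
    nth_rewrite 2 [h]
    rw [neg_one_smul, add_neg_cancel]
  rw [← two_smul k] at h2
  rcases smul_eq_zero.mp h2 with h3 | h3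
  · exact absurd h3 (two_ne_zero' k)
  · exact h3

lemma smul_cancel_two' {Z : Type*} [AddCommGroup Z] [Module k Z] {a : Z}
    (h : a = -a) : a = 0 := by
  apply smul_cancel_two (k := k)
  rw [neg_one_smul]
  exact h

lemma mem_tsq_one {x : V ⊗[k] V} : x ∈ Tsq k V 1 ↔ tau k V x = x := by
  rw [Tsq, Module.End.mem_eigenspace_iff]
  norm_num

lemma mem_tsq_neg_one {x : V ⊗[k] V} : x ∈ Tsq k V (-1) ↔ tau k V x = -x := by
  rw [Tsq, Module.End.mem_eigenspace_iff]
  push_cast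
  rw [neg_one_smul]

lemma tsq_one_eq (Φ : (W ⊗[k] U) ≃ₗ[k] V) :
    Tsq k V 1 = LinearMap.range (mkP Φ (pP (k := k) W) (pP (k := k) U))
      ⊔ LinearMap.range (mkP Φ (pM (k := k) W) (pM (k := k) U)) := by
  have hτ1 : tau k V ∘ₗ mkP Φ (pP (k := k) W) (pP (k := k) U)
      = mkP Φ (pP (k := k) W) (pP (k := k) U) := by
    rw [tau_comp_mkP, tau_comp_pP, tau_comp_pP]
  have hτ2 : tau k V ∘ₗ mkP Φ (pM (k := k) W) (pM (k := k) U)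
      = mkP Φ (pM (k := k) W) (pM (k := k) U) := by
    rw [tau_comp_mkP, tau_comp_pM, tau_comp_pM, mkP_smul_left, mkP_smul_right, smul_smul]
    norm_num
  have hτ3 : mkP Φ (pP (k := k) W) (pM (k := k) U) ∘ₗ tau k V
      = (-1 : k) • mkP Φ (pP (k := k) W) (pM (k := k) U) := by
    rw [mkP_comp_tau, pP_comp_tau, pM_comp_tau, mkP_smul_right]
  have hτ4 : mkP Φ (pM (k := k) W) (pP (k := k) U) ∘ₗ tau k V
      = (-1 : k) • mkP Φ (pM (k := k) W) (pP (k := k) U) := by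
    rw [mkP_comp_tau, pM_comp_tau, pP_comp_tau, mkP_smul_left]
  apply le_antisymm
  · intro x hx
    have hτx : tau k V x = x := mem_tsq_one.mp hx
    have h3 : mkP Φ (pP (k := k) W) (pM (k := k) U) x = 0 := by
      have h := LinearMap.congr_fun hτ3 x
      simp only [LinearMap.comp_apply, LinearMap.smul_apply] at h
      rw [hτx] at h
      exact smul_cancel_two h
    have h4 : mkP Φ (pM (k := k) W) (pP (k := k) U) x = 0 := by
      have h := LinearMap.congr_fun hτ4 x
      simp only [LinearMap.comp_apply, LinearMap.smul_apply] at h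
      rw [hτx] at h
      exact smul_cancel_two h
    have hsum := LinearMap.congr_fun (mkP_four_sum Φ) x
    simp only [LinearMap.add_apply, LinearMap.id_apply] at hsum
    rw [h3, h4, add_zero, add_zero] at hsum
    rw [Submodule.mem_sup]
    exact ⟨_, ⟨x, rfl⟩, _, ⟨x, rfl⟩, hsum⟩
  · apply sup_le
    · rintro y ⟨x, rfl⟩
      apply mem_tsq_one.mpr
      have h := LinearMap.congr_fun hτ1 x
      simpa only [LinearMap.comp_apply] using h
    · rintro y ⟨x, rfl⟩
      apply mem_tsq_one.mpr
      have h := LinearMap.congr_fun hτ2 x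
      simpa only [LinearMap.comp_apply] using h

lemma tsq_neg_one_eq (Φ : (W ⊗[k] U) ≃ₗ[k] V) :
    Tsq k V (-1) = LinearMap.range (mkP Φ (pP (k := k) W) (pM (k := k) U))
      ⊔ LinearMap.range (mkP Φ (pM (k := k) W) (pP (k := k) U)) := by
  have hτ3 : tau k V ∘ₗ mkP Φ (pP (k := k) W) (pM (k := k) U)
      = (-1 : k) • mkP Φ (pP (k := k) W) (pM (k := k) U) := by
    rw [tau_comp_mkP, tau_comp_pP, tau_comp_pM, mkP_smul_right]
  have hτ4 : tau k V ∘ₗ mkP Φ (pM (k := k) W) (pP (k := k) U)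
      = (-1 : k) • mkP Φ (pM (k := k) W) (pP (k := k) U) := by
    rw [tau_comp_mkP, tau_comp_pM, tau_comp_pP, mkP_smul_left]
  have hτ1 : mkP Φ (pP (k := k) W) (pP (k := k) U) ∘ₗ tau k V
      = mkP Φ (pP (k := k) W) (pP (k := k) U) := by
    rw [mkP_comp_tau, pP_comp_tau, pP_comp_tau]
  have hτ2 : mkP Φ (pM (k := k) W) (pM (k := k) U) ∘ₗ tau k V
      = mkP Φ (pM (k := k) W) (pM (k := k) U) := by
    rw [mkP_comp_tau, pM_comp_tau, pM_comp_tau, mkP_smul_left, mkP_smul_right, smul_smul]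
    norm_num
  apply le_antisymm
  · intro x hx
    have hτx : tau k V x = -x := mem_tsq_neg_one.mp hx
    have h1 : mkP Φ (pP (k := k) W) (pP (k := k) U) x = 0 := by
      have h := LinearMap.congr_fun hτ1 x
      simp only [LinearMap.comp_apply] at h
      rw [hτx, map_neg] at h
      exact smul_cancel_two' (k := k) h.symm
    have h2 : mkP Φ (pM (k := k) W) (pM (k := k) U) x = 0 := by
      have h := LinearMap.congr_fun hτ2 x
      simp only [LinearMap.comp_apply] at h
      rw [hτx, map_neg] at h
      exact smul_cancel_two' (k := k) h.symm
    have hsum := LinearMap.congr_fun (mkP_four_sum Φ) x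
    simp only [LinearMap.add_apply, LinearMap.id_apply] at hsum
    rw [h1, h2, zero_add, zero_add] at hsum
    rw [Submodule.mem_sup]
    exact ⟨_, ⟨x, rfl⟩, _, ⟨x, rfl⟩, hsum⟩
  · apply sup_le
    · rintro y ⟨x, rfl⟩
      apply mem_tsq_neg_one.mpr
      have h := LinearMap.congr_fun hτ3 x
      simp only [LinearMap.comp_apply, LinearMap.smul_apply] at h
      rw [h, neg_one_smul]
    · rintro y ⟨x, rfl⟩
      apply mem_tsq_neg_one.mpr
      have h := LinearMap.congr_fun hτ4 x
      simp only [LinearMap.comp_apply, LinearMap.smul_apply] at h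
      rw [h, neg_one_smul]

end TsqChar

section Elems

variable {W U : Type*} [AddCommGroup W] [Module k W] [AddCommGroup U] [Module k U]

lemma le_finrank_of_li {Z : Type*} [AddCommGroup Z] [Module k Z] [FiniteDimensional k Z]
    {n : ℕ} {A : Submodule k Z} (x : Fin n → Z) (hx : ∀ i, x i ∈ A)
    (h : LinearIndependent k x) : n ≤ Module.finrank k A := by
  have hv : LinearIndependent k (fun i : Fin n => (⟨x i, hx i⟩ : A)) := by
    apply LinearIndependent.of_comp A.subtype
    have : (A.subtype ∘ fun i : Fin n => (⟨x i, hx i⟩ : A)) = x := by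
      funext i; rfl
    rw [this]
    exact h
  have := hv.fintype_card_le_finrank
  simpa using this

lemma mem_range_mkP_fixed (Φ : (W ⊗[k] U) ≃ₗ[k] V) (f : Module.End k (W ⊗[k] W))
    (g : Module.End k (U ⊗[k] U)) {z : (W ⊗[k] W) ⊗[k] (U ⊗[k] U)}
    (hz : TensorProduct.map f g z = z) :
    Theta Φ z ∈ LinearMap.range (mkP Φ f g) :=
  ⟨Theta Φ z, by rw [mkP_theta, hz]⟩

lemma le_finrank_range_mkP {n : ℕ} (Φ : (W ⊗[k] U) ≃ₗ[k] V) (f : Module.End k (W ⊗[k] W))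
    (g : Module.End k (U ⊗[k] U)) (z : Fin n → (W ⊗[k] W) ⊗[k] (U ⊗[k] U))
    (hz : ∀ j, TensorProduct.map f g (z j) = z j)
    (D : Fin n → (((W ⊗[k] W) ⊗[k] (U ⊗[k] U)) →ₗ[k] k))
    (hD : ∀ i j, D i (z j) = if i = j then 1 else 0) :
    n ≤ Module.finrank k (LinearMap.range (mkP Φ f g)) := by
  apply le_finrank_of_li (fun j => Theta Φ (z j))
  · intro j
    exact mem_range_mkP_fixed Φ f g (hz j)
  · apply li_of_dual _ (fun i => D i ∘ₗ (Theta Φ).symm.toLinearMap)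
    intro i j
    show D i ((Theta Φ).symm (Theta Φ (z j))) = _
    rw [LinearEquiv.symm_apply_apply]
    exact hD i j

/-- Four-fold dual functional. -/
noncomputable def dual4 (f1 f2 : W →ₗ[k] k) (g1 g2 : U →ₗ[k] k) :
    ((W ⊗[k] W) ⊗[k] (U ⊗[k] U)) →ₗ[k] k :=
  dual2 (dual2 f1 f2) (dual2 g1 g2)

lemma dual4_tmul (f1 f2 : W →ₗ[k] k) (g1 g2 : U →ₗ[k] k) (a : W ⊗[k] W) (b : U ⊗[k] U) :
    dual4 f1 f2 g1 g2 (a ⊗ₜ[k] b) = dual2 f1 f2 a * dual2 g1 g2 b :=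
  dual2_tmul _ _ a b

/-- antisymmetric two-tensor -/
noncomputable def asym {M : Type*} [AddCommGroup M] [Module k M] (x y : M) : M ⊗[k] M :=
  x ⊗ₜ[k] y - y ⊗ₜ[k] x

lemma tau_asym {M : Type*} [AddCommGroup M] [Module k M] (x y : M) :
    tau k M (asym (k := k) x y) = -(asym (k := k) x y) := by
  rw [show asym (k := k) x y = x ⊗ₜ[k] y - y ⊗ₜ[k] x from rfl, map_sub, tau_tmul, tau_tmul, neg_sub]

lemma pM_asym {M : Type*} [AddCommGroup M] [Module k M] (x y : M) :
    pM (k := k) M (asym (k := k) x y) = asym (k := k) x y :=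
  pM_of_anti (tau_asym x y)

lemma pP_sq {M : Type*} [AddCommGroup M] [Module k M] (x : M) :
    pP (k := k) M (x ⊗ₜ[k] x) = x ⊗ₜ[k] x :=
  pP_of_fixed rfl

lemma dual2_asym {M : Type*} [AddCommGroup M] [Module k M] (f g : M →ₗ[k] k) (x y : M) :
    dual2 f g (asym (k := k) x y) = f x * g y - f y * g x := by
  rw [show asym (k := k) x y = x ⊗ₜ[k] y - y ⊗ₜ[k] x from rfl, map_sub, dual2_tmul, dual2_tmul]

end Elems

section Ranks

variable {W U : Type*} [AddCommGroup W] [Module k W] [AddCommGroup U] [Module k U]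

lemma rank_P1 (Φ : (W ⊗[k] U) ≃ₗ[k] V)
    (w : Fin 2 → W) (fW : Fin 2 → (W →ₗ[k] k))
    (hfW : ∀ i j, fW i (w j) = if i = j then 1 else 0)
    (u : Fin 2 → U) (fU : Fin 2 → (U →ₗ[k] k))
    (hfU : ∀ i j, fU i (u j) = if i = j then 1 else 0) :
    2 ≤ Module.finrank k (LinearMap.range (mkP Φ (pP (k := k) W) (pP (k := k) U))) := by
  apply le_finrank_range_mkP Φ _ _
    (fun j => (w j ⊗ₜ[k] w j) ⊗ₜ[k] (u 0 ⊗ₜ[k] u 0))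
    (fun j => by rw [TensorProduct.map_tmul, pP_sq, pP_sq])
    (fun i => dual4 (fW i) (fW i) (fU 0) (fU 0))
  intro i j
  rw [dual4_tmul, dual2_tmul, dual2_tmul]
  simp only [hfW, hfU]
  by_cases h : i = j <;> simp [h]

lemma rank_P3 (Φ : (W ⊗[k] U) ≃ₗ[k] V)
    (w : Fin 2 → W) (fW : Fin 2 → (W →ₗ[k] k))
    (hfW : ∀ i j, fW i (w j) = if i = j then 1 else 0)
    (u : Fin 2 → U) (fU : Fin 2 → (U →ₗ[k] k))
    (hfU : ∀ i j, fU i (u j) = if i = j then 1 else 0) :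
    2 ≤ Module.finrank k (LinearMap.range (mkP Φ (pP (k := k) W) (pM (k := k) U))) := by
  apply le_finrank_range_mkP Φ _ _
    (fun j => (w j ⊗ₜ[k] w j) ⊗ₜ[k] (asym (k := k) (u 0) (u 1)))
    (fun j => by rw [TensorProduct.map_tmul, pP_sq, pM_asym])
    (fun i => dual4 (fW i) (fW i) (fU 0) (fU 1))
  intro i j
  rw [dual4_tmul, dual2_tmul, dual2_asym]
  simp only [hfW, hfU]
  by_cases h : i = j <;> simp [h]

lemma rank_P4 (Φ : (W ⊗[k] U) ≃ₗ[k] V)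
    (w : Fin 2 → W) (fW : Fin 2 → (W →ₗ[k] k))
    (hfW : ∀ i j, fW i (w j) = if i = j then 1 else 0)
    (u : Fin 2 → U) (fU : Fin 2 → (U →ₗ[k] k))
    (hfU : ∀ i j, fU i (u j) = if i = j then 1 else 0) :
    2 ≤ Module.finrank k (LinearMap.range (mkP Φ (pM (k := k) W) (pP (k := k) U))) := by
  apply le_finrank_range_mkP Φ _ _
    (fun j => (asym (k := k) (w 0) (w 1)) ⊗ₜ[k] (u j ⊗ₜ[k] u j))
    (fun j => by rw [TensorProduct.map_tmul, pM_asym, pP_sq])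
    (fun i => dual4 (fW 0) (fW 1) (fU i) (fU i))
  intro i j
  rw [dual4_tmul, dual2_asym, dual2_tmul]
  simp only [hfW, hfU]
  by_cases h : i = j <;> simp [h]

lemma exists_b0 (Φ : (W ⊗[k] U) ≃ₗ[k] V)
    (w : Fin 2 → W) (fW : Fin 2 → (W →ₗ[k] k))
    (hfW : ∀ i j, fW i (w j) = if i = j then 1 else 0)
    (u : Fin 2 → U) (fU : Fin 2 → (U →ₗ[k] k))
    (hfU : ∀ i j, fU i (u j) = if i = j then 1 else 0) :
    ∃ (b₀ : V ⊗[k] V) (ℓ : (V ⊗[k] V) →ₗ[k] k),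
      b₀ ∈ LinearMap.range (mkP Φ (pM (k := k) W) (pM (k := k) U)) ∧ ℓ b₀ = 1 := by
  refine ⟨Theta Φ ((asym (k := k) (w 0) (w 1)) ⊗ₜ[k] (asym (k := k) (u 0) (u 1))),
    dual4 (fW 0) (fW 1) (fU 0) (fU 1) ∘ₗ (Theta Φ).symm.toLinearMap, ?_, ?_⟩
  · exact mem_range_mkP_fixed Φ _ _ (by rw [TensorProduct.map_tmul, pM_asym, pM_asym])
  · have h1 : (dual4 (fW 0) (fW 1) (fU 0) (fU 1) ∘ₗ (Theta Φ).symm.toLinearMap)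
        (Theta Φ ((asym (k := k) (w 0) (w 1)) ⊗ₜ[k] (asym (k := k) (u 0) (u 1))))
        = dual4 (fW 0) (fW 1) (fU 0) (fU 1)
          ((asym (k := k) (w 0) (w 1)) ⊗ₜ[k] (asym (k := k) (u 0) (u 1))) := by
      rw [LinearMap.comp_apply]
      congr 1
      exact (Theta Φ).symm_apply_apply _
    rw [h1, dual4_tmul, dual2_asym, dual2_asym]
    simp only [hfW, hfU]
    simp

lemma rank_P2_of_three_W (Φ : (W ⊗[k] U) ≃ₗ[k] V)
    (w : Fin 3 → W) (fW : Fin 3 → (W →ₗ[k] k))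
    (hfW : ∀ i j, fW i (w j) = if i = j then 1 else 0)
    (u : Fin 2 → U) (fU : Fin 2 → (U →ₗ[k] k))
    (hfU : ∀ i j, fU i (u j) = if i = j then 1 else 0) :
    2 ≤ Module.finrank k (LinearMap.range (mkP Φ (pM (k := k) W) (pM (k := k) U))) := by
  apply le_finrank_range_mkP Φ _ _
    (fun j : Fin 2 => (asym (k := k) (w 0) (w j.succ)) ⊗ₜ[k] (asym (k := k) (u 0) (u 1)))
    (fun j => by rw [TensorProduct.map_tmul, pM_asym, pM_asym])
    (fun i => dual4 (fW 0) (fW i.succ) (fU 0) (fU 1))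
  intro i j
  rw [dual4_tmul, dual2_asym, dual2_asym]
  simp only [hfW, hfU]
  have h3 : ¬ ((0 : Fin 3) = Fin.succ j) := fun hh => (Fin.succ_ne_zero j) hh.symm
  by_cases h : i = j
  · subst h
    simp [h3]
  · have h2 : ¬ (Fin.succ i = Fin.succ j) := fun hh => h (Fin.succ_inj.mp hh)
    simp [h2, h3, h]

lemma rank_P2_of_three_U (Φ : (W ⊗[k] U) ≃ₗ[k] V)
    (w : Fin 2 → W) (fW : Fin 2 → (W →ₗ[k] k))
    (hfW : ∀ i j, fW i (w j) = if i = j then 1 else 0)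
    (u : Fin 3 → U) (fU : Fin 3 → (U →ₗ[k] k))
    (hfU : ∀ i j, fU i (u j) = if i = j then 1 else 0) :
    2 ≤ Module.finrank k (LinearMap.range (mkP Φ (pM (k := k) W) (pM (k := k) U))) := by
  apply le_finrank_range_mkP Φ _ _
    (fun j : Fin 2 => (asym (k := k) (w 0) (w 1)) ⊗ₜ[k] (asym (k := k) (u 0) (u j.succ)))
    (fun j => by rw [TensorProduct.map_tmul, pM_asym, pM_asym])
    (fun i => dual4 (fW 0) (fW 1) (fU 0) (fU i.succ))
  intro i j
  rw [dual4_tmul, dual2_asym, dual2_asym]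
  simp only [hfW, hfU]
  have h3 : ¬ ((0 : Fin 3) = Fin.succ j) := fun hh => (Fin.succ_ne_zero j) hh.symm
  by_cases h : i = j
  · subst h
    simp [h3]
  · have h2 : ¬ (Fin.succ i = Fin.succ j) := fun hh => h (Fin.succ_inj.mp hh)
    simp [h2, h3, h]

end Ranks

section Glue

variable {W U : Type*} [AddCommGroup W] [Module k W] [AddCommGroup U] [Module k U]

lemma exists_delta_family (n : ℕ) [FiniteDimensional k W] (h : n ≤ Module.finrank k W) :
    ∃ (w : Fin n → W) (f : Fin n → (W →ₗ[k] k)),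
      ∀ i j, f i (w j) = if i = j then 1 else 0 := by
  set b := Module.finBasis k W with hb
  refine ⟨fun i => b (Fin.castLE h i), fun i => b.coord (Fin.castLE h i), ?_⟩
  intro i j
  rw [Module.Basis.coord_apply, Module.Basis.repr_self, Finsupp.single_apply]
  by_cases hij : i = j
  · subst hij; simp
  · have : ¬ (Fin.castLE h j = Fin.castLE h i) := by
      intro hc
      exact hij (Fin.castLE_injective h hc).symm
    simp [this, hij]

lemma isSubrep_range {G' Z : Type*} [Group G'] [AddCommGroup Z] [Module k Z]
    (ρ' : Representation k G' Z) (P : Module.End k Z)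
    (hc : ∀ g, ρ' g ∘ₗ P = P ∘ₗ ρ' g) : IsSubrep ρ' (LinearMap.range P) := by
  rintro g v ⟨y, rfl⟩
  exact ⟨ρ' g y, (LinearMap.congr_fun (hc g) y).symm⟩

lemma mkP_zero_left (Φ : (W ⊗[k] U) ≃ₗ[k] V) (g : Module.End k (U ⊗[k] U)) :
    mkP Φ (0 : Module.End k (W ⊗[k] W)) g = 0 := by
  have h0 : (0 : Module.End k (W ⊗[k] W)) = (0 : k) • (0 : Module.End k (W ⊗[k] W)) := by
    rw [zero_smul]
  rw [h0, mkP_smul_left, zero_smul]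

end Glue

section ModelMain

variable {W U : Type*} [AddCommGroup W] [Module k W] [AddCommGroup U] [Module k U]

set_option maxHeartbeats 2000000 in
lemma model_main {G' : Type*} [Group G'] (ρ : Representation k G' V)
    (hirr : IsIrred ρ) (ε : ℤ) (hε : ε = 1 ∨ ε = -1) (hsmall : IsSmall ρ ε)
    [FiniteDimensional k W] [FiniteDimensional k U]
    (hW : 2 ≤ Module.finrank k W) (hU : 2 ≤ Module.finrank k U)
    (Φ : (W ⊗[k] U) ≃ₗ[k] V)
    (hfac : ∀ g : G', ∃ (β : Module.End k W) (C : Module.End k U),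
      Φ.symm.toLinearMap ∘ₗ (ρ g : V →ₗ[k] V) ∘ₗ Φ.toLinearMap = TensorProduct.map β C) :
    Module.finrank k V = 4 ∧ QuadSimilitude ρ := by
  obtain ⟨w2, fW2, hfW2⟩ := exists_delta_family (W := W) 2 hW
  obtain ⟨u2, fU2, hfU2⟩ := exists_delta_family (W := U) 2 hU
  -- commutation of the projectors with the tensor square representation
  have hcomm : ∀ (f : Module.End k (W ⊗[k] W)) (g' : Module.End k (U ⊗[k] U)),
      (∀ β : Module.End k W, TensorProduct.map β β ∘ₗ f = f ∘ₗ TensorProduct.map β β) →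
      (∀ C : Module.End k U, TensorProduct.map C C ∘ₗ g' = g' ∘ₗ TensorProduct.map C C) →
      ∀ g : G', (ρ.tprod ρ) g ∘ₗ mkP Φ f g' = mkP Φ f g' ∘ₗ (ρ.tprod ρ) g := by
    intro f g' hf hg g
    obtain ⟨β, C, hβC⟩ := hfac g
    rw [Representation.tprod_apply, comp_mkP_of_conj Φ (ρ g) β C hβC,
      mkP_comp_of_conj Φ (ρ g) β C hβC, hf β, hg C]
  have hsub1 : IsSubrep (ρ.tprod ρ)
      (LinearMap.range (mkP Φ (pP (k := k) W) (pP (k := k) U))) :=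
    isSubrep_range _ _ (hcomm _ _ (fun β => mapbb_pP β) (fun C => mapbb_pP C))
  have hsub2 : IsSubrep (ρ.tprod ρ)
      (LinearMap.range (mkP Φ (pM (k := k) W) (pM (k := k) U))) :=
    isSubrep_range _ _ (hcomm _ _ (fun β => mapbb_pM β) (fun C => mapbb_pM C))
  have hsub3 : IsSubrep (ρ.tprod ρ)
      (LinearMap.range (mkP Φ (pP (k := k) W) (pM (k := k) U))) :=
    isSubrep_range _ _ (hcomm _ _ (fun β => mapbb_pP β) (fun C => mapbb_pM C))
  have hsub4 : IsSubrep (ρ.tprod ρ)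
      (LinearMap.range (mkP Φ (pM (k := k) W) (pP (k := k) U))) :=
    isSubrep_range _ _ (hcomm _ _ (fun β => mapbb_pM β) (fun C => mapbb_pP C))
  have hP1idem : mkP Φ (pP (k := k) W) (pP (k := k) U)
      ∘ₗ mkP Φ (pP (k := k) W) (pP (k := k) U)
      = mkP Φ (pP (k := k) W) (pP (k := k) U) := by
    rw [mkP_comp, pP_pP, pP_pP]
  have hP2idem : mkP Φ (pM (k := k) W) (pM (k := k) U)
      ∘ₗ mkP Φ (pM (k := k) W) (pM (k := k) U)
      = mkP Φ (pM (k := k) W) (pM (k := k) U) := by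
    rw [mkP_comp, pM_pM, pM_pM]
  have hP3idem : mkP Φ (pP (k := k) W) (pM (k := k) U)
      ∘ₗ mkP Φ (pP (k := k) W) (pM (k := k) U)
      = mkP Φ (pP (k := k) W) (pM (k := k) U) := by
    rw [mkP_comp, pP_pP, pM_pM]
  have hP12 : mkP Φ (pP (k := k) W) (pP (k := k) U)
      ∘ₗ mkP Φ (pM (k := k) W) (pM (k := k) U) = 0 := by
    rw [mkP_comp, pP_pM, mkP_zero_left]
  have hP34 : mkP Φ (pP (k := k) W) (pM (k := k) U)
      ∘ₗ mkP Φ (pM (k := k) W) (pP (k := k) U) = 0 := by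
    rw [mkP_comp, pP_pM, mkP_zero_left]
  have hdisj12 := range_inf_eq_bot hP1idem hP12
  have hdisj34 := range_inf_eq_bot hP3idem hP34
  -- rank estimates
  have hA2 : 2 ≤ Module.finrank k
      (LinearMap.range (mkP Φ (pP (k := k) W) (pP (k := k) U))) :=
    rank_P1 Φ w2 fW2 hfW2 u2 fU2 hfU2
  obtain ⟨b₀, ℓ, hb₀mem, hℓb₀⟩ := exists_b0 Φ w2 fW2 hfW2 u2 fU2 hfU2
  have hb₀ne : b₀ ≠ 0 := by
    intro h
    rw [h, map_zero] at hℓb₀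
    exact one_ne_zero hℓb₀.symm
  have hBne : LinearMap.range (mkP Φ (pM (k := k) W) (pM (k := k) U)) ≠ ⊥ := by
    intro h
    apply hb₀ne
    rw [h, Submodule.mem_bot] at hb₀mem
    exact hb₀mem
  -- eliminate ε = -1
  rcases hε with rfl | rfl
  swap
  · exfalso
    have hA2' := rank_P3 Φ w2 fW2 hfW2 u2 fU2 hfU2
    have hB2' := rank_P4 Φ w2 fW2 hfW2 u2 fU2 hfU2
    have hBne' : LinearMap.range (mkP Φ (pM (k := k) W) (pP (k := k) U)) ≠ ⊥ := by
      intro h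
      rw [h, finrank_bot] at hB2'
      omega
    have := small_bound ρ (-1) hsmall _ _ hsub3 hsub4 hdisj34 (tsq_neg_one_eq Φ).symm
      hBne' hA2'
    omega
  -- ε = 1
  have hBrank := small_bound ρ 1 hsmall _ _ hsub1 hsub2 hdisj12 (tsq_one_eq Φ).symm
    hBne hA2
  have hdW : Module.finrank k W = 2 := by
    by_contra hne
    have h3 : 3 ≤ Module.finrank k W := by omega
    obtain ⟨w3, fW3, hfW3⟩ := exists_delta_family (W := W) 3 h3
    have := rank_P2_of_three_W Φ w3 fW3 hfW3 u2 fU2 hfU2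
    omega
  have hdU : Module.finrank k U = 2 := by
    by_contra hne
    have h3 : 3 ≤ Module.finrank k U := by omega
    obtain ⟨u3, fU3, hfU3⟩ := exists_delta_family (W := U) 3 h3
    have := rank_P2_of_three_U Φ w2 fW2 hfW2 u3 fU3 hfU3
    omega
  have hdimV : Module.finrank k V = 4 := by
    have h1 : Module.finrank k (W ⊗[k] U) = Module.finrank k V := LinearEquiv.finrank_eq Φ
    rw [← h1, Module.finrank_tensorProduct, hdW, hdU]
  refine ⟨hdimV, ?_⟩
  -- the quadratic form
  set Pm := mkP Φ (pM (k := k) W) (pM (k := k) U) with hPm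
  set B := LinearMap.range Pm with hB
  have hspan : ∀ x ∈ B, ∃ a : k, x = a • b₀ := by
    have hb' : (⟨b₀, hb₀mem⟩ : B) ≠ 0 := by
      intro h
      exact hb₀ne (congrArg Subtype.val h)
    have hone := (finrank_eq_one_iff_of_nonzero' (⟨b₀, hb₀mem⟩ : B) hb').mp hBrank
    intro x hx
    obtain ⟨a, ha⟩ := hone ⟨x, hx⟩
    exact ⟨a, (congrArg Subtype.val ha).symm⟩
  have hPmcomm : ∀ g : G', (ρ.tprod ρ) g ∘ₗ Pm = Pm ∘ₗ (ρ.tprod ρ) g :=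
    hcomm _ _ (fun β => mapbb_pM β) (fun C => mapbb_pM C)
  have hactB : ∀ (g : G') (x), x ∈ B → (ρ.tprod ρ) g x ∈ B := hsub2
  have hscal : ∀ g : G', ∃ a : k, (ρ.tprod ρ) g b₀ = a • b₀ :=
    fun g => hspan _ (hactB g b₀ hb₀mem)
  choose c hc using hscal
  have hcne : ∀ g, c g ≠ 0 := by
    intro g h0
    apply hb₀ne
    have h1 : (ρ.tprod ρ) g⁻¹ ((ρ.tprod ρ) g b₀) = b₀ := by
      rw [← Module.End.mul_apply, ← map_mul, inv_mul_cancel, map_one, Module.End.one_apply]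
    rw [hc g, h0, zero_smul, map_zero] at h1
    exact h1.symm
  have hb_inj : ∀ {a b : k}, a • b₀ = b • b₀ → a = b := by
    intro a b h
    by_contra hne
    apply hb₀ne
    have h1 : (a - b) • b₀ = 0 := by rw [sub_smul, h, sub_self]
    rcases smul_eq_zero.mp h1 with h2 | h2
    · exact absurd (sub_eq_zero.mp h2) hne
    · exact h2
  have hcmul : ∀ g h : G', c (g * h) = c g * c h := by
    intro g h
    apply hb_inj
    rw [← hc (g * h), map_mul, Module.End.mul_apply, hc h, map_smul, hc g, smul_smul]
    rw [mul_comm (c h) (c g)]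
  have hactB' : ∀ (g : G') (x), x ∈ B → (ρ.tprod ρ) g x = c g • x := by
    intro g x hx
    obtain ⟨a, rfl⟩ := hspan x hx
    rw [map_smul, hc g, smul_smul, smul_smul, mul_comm]
  set lam : G' →* kˣ := MonoidHom.mk' (fun g => Units.mk0 (c g) (hcne g))
    (fun a b => Units.ext (by simp [hcmul])) with hlam
  have hPmb₀ : Pm b₀ = b₀ := (mem_range_idem hP2idem).mp hb₀mem
  have hPmtau : Pm ∘ₗ tau k V = Pm := by
    rw [hPm, mkP_comp_tau, pM_comp_tau, pM_comp_tau, mkP_smul_left, mkP_smul_right,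
      smul_smul]
    norm_num
  set Bil : V →ₗ[k] V →ₗ[k] k := (TensorProduct.mk k V V).compr₂ (ℓ ∘ₗ Pm) with hBil
  have hBil_apply : ∀ v v', Bil v v' = ℓ (Pm (v ⊗ₜ[k] v')) := by
    intro v v'
    rw [hBil, LinearMap.compr₂_apply, LinearMap.comp_apply]
    rfl
  have hBil_symm : ∀ v v', Bil v v' = Bil v' v := by
    intro v v'
    rw [hBil_apply, hBil_apply]
    congr 1
    have h1 : (v' ⊗ₜ[k] v : V ⊗[k] V) = tau k V (v ⊗ₜ[k] v') := (tau_tmul v v').symm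
    rw [h1]
    exact (LinearMap.congr_fun hPmtau (v ⊗ₜ[k] v')).symm
  have hBil_g : ∀ (g : G') (v v' : V), Bil (ρ g v) (ρ g v') = c g * Bil v v' := by
    intro g v v'
    rw [hBil_apply, hBil_apply]
    have h1 : (ρ g v) ⊗ₜ[k] (ρ g v') = (ρ.tprod ρ) g (v ⊗ₜ[k] v') := by
      rw [Representation.tprod_apply, TensorProduct.map_tmul]
    have h2 : Pm ((ρ.tprod ρ) g (v ⊗ₜ[k] v')) = (ρ.tprod ρ) g (Pm (v ⊗ₜ[k] v')) :=
      (LinearMap.congr_fun (hPmcomm g) (v ⊗ₜ[k] v')).symm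
    rw [h1, h2, hactB' g _ (LinearMap.mem_range_self Pm _), map_smul, smul_eq_mul]
  -- nondegeneracy via irreducibility
  have hKer : ∀ v : V, (∀ v', Bil v v' = 0) → v = 0 := by
    set K := LinearMap.ker Bil with hK
    have hKsub : IsSubrep ρ K := by
      intro g v hv
      rw [LinearMap.mem_ker] at hv ⊢
      apply LinearMap.ext
      intro v'
      show Bil (ρ g v) v' = 0
      have h1 : ρ g (ρ g⁻¹ v') = v' := by
        rw [← Module.End.mul_apply, ← map_mul, mul_inv_cancel, map_one, Module.End.one_apply]
      rw [← h1, hBil_g g v (ρ g⁻¹ v')]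
      have h2 : Bil v (ρ g⁻¹ v') = 0 := by
        rw [hv]
        rfl
      rw [h2, mul_zero]
    rcases hirr.2 K hKsub with hKbot | hKtop
    · intro v hv
      have hvK : v ∈ K := LinearMap.mem_ker.mpr (LinearMap.ext hv)
      rw [hKbot, Submodule.mem_bot] at hvK
      exact hvK
    · exfalso
      have hzero : (ℓ ∘ₗ Pm : (V ⊗[k] V) →ₗ[k] k) = 0 := by
        apply TensorProduct.ext'
        intro v v'
        have hvK : v ∈ K := by rw [hKtop]; trivial
        have : Bil v v' = 0 := by
          rw [LinearMap.mem_ker] at hvK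
          rw [hvK]
          rfl
        have h4 : (ℓ ∘ₗ Pm) (v ⊗ₜ[k] v') = Bil v v' := (hBil_apply v v').symm
        show (ℓ ∘ₗ Pm) (v ⊗ₜ[k] v') = (0 : (V ⊗[k] V) →ₗ[k] k) (v ⊗ₜ[k] v')
        rw [h4, this]
        rfl
      have := LinearMap.congr_fun hzero b₀
      rw [LinearMap.comp_apply, hPmb₀, hℓb₀] at this
      simp at this
  refine ⟨LinearMap.BilinMap.toQuadraticMap Bil, lam, ?_, ?_⟩
  · -- nondegenerate polar form
    suffices hleft : LinearMap.SeparatingLeft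
        (QuadraticMap.polarBilin (LinearMap.BilinMap.toQuadraticMap Bil)) from
      ⟨hleft, fun v hv => hleft v fun v' => by
        rw [QuadraticMap.polarBilin_apply_apply, QuadraticMap.polar_comm,
          ← QuadraticMap.polarBilin_apply_apply]
        exact hv v'⟩
    intro v hv
    apply hKer v
    intro v'
    have hp := hv v'
    have hQ : ∀ x, LinearMap.BilinMap.toQuadraticMap Bil x = Bil x x := fun x =>
      LinearMap.BilinMap.toQuadraticMap_apply Bil x
    have hpolar : QuadraticMap.polarBilin (LinearMap.BilinMap.toQuadraticMap Bil) v v'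
        = Bil v v' + Bil v' v := by
      simp only [QuadraticMap.polarBilin_apply_apply, QuadraticMap.polar, hQ, map_add,
        LinearMap.add_apply]
      ring
    have hsym := hBil_symm v v'
    rw [hpolar, ← hsym] at hp
    have h2 : (2 : k) * Bil v v' = 0 := by
      rw [two_mul]
      exact hp
    rcases mul_eq_zero.mp h2 with h3 | h3
    · exact absurd h3 (two_ne_zero' k)
    · exact h3
  · intro g v
    have hQ : ∀ x, LinearMap.BilinMap.toQuadraticMap Bil x = Bil x x := fun x =>
      LinearMap.BilinMap.toQuadraticMap_apply Bil x
    rw [hQ, hQ, hBil_g]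
    rfl

end ModelMain

section FinalAux

lemma scalar_of_finrank_le_one {W : Type*} [AddCommGroup W] [Module k W]
    [FiniteDimensional k W] [Nontrivial W] (hle : Module.finrank k W ≤ 1)
    (f : Module.End k W) : ∃ c : k, f = c • (LinearMap.id : Module.End k W) := by
  obtain ⟨v, hv⟩ := exists_ne (0 : W)
  have h1 : 1 ≤ Module.finrank k W := by
    have : 0 < Module.finrank k W := Module.finrank_pos
    omega
  have heq : Module.finrank k W = 1 := le_antisymm hle h1
  have hone := (finrank_eq_one_iff_of_nonzero' v hv).mp heq
  obtain ⟨c, hc⟩ := hone (f v)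
  refine ⟨c, ?_⟩
  apply LinearMap.ext
  intro w
  obtain ⟨a, ha⟩ := hone w
  calc f w = f (a • v) := by rw [ha]
    _ = a • f v := map_smul f a v
    _ = a • (c • v) := by rw [hc]
    _ = c • (a • v) := smul_comm a c v
    _ = c • w := by rw [ha]
    _ = (c • (LinearMap.id : Module.End k W)) w := rfl

lemma tensor_fin_zero_eq_zero {W : Type*} [AddCommGroup W] [Module k W]
    (x : W ⊗[k] (Fin 0 → k)) : x = 0 := by
  induction x with
  | zero => rfl
  | tmul w f =>
    have : f = 0 := Subsingleton.elim f 0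
    rw [this, TensorProduct.tmul_zero]
  | add a b ha hb => rw [ha, hb, add_zero]

end FinalAux

end Aux

/-- Isotypic but non-irreducible case: if all irreducible `H`-submodules of a faithful
irreducible `ε`-small representation `V` are pairwise isomorphic, `H` is normal and
non-central, and `V|_H` is not irreducible, then `dim V = 4` and `G` preserves a
nondegenerate quadratic form up to similitude. -/
theorem small_rep_isotypic_not_irreducible
    (k G V : Type*) [Field k] [IsAlgClosed k] [CharZero k] [Group G] [Finite G]
    [AddCommGroup V] [Module k V] [FiniteDimensional k V]
    (ρ : Representation k G V) (ε : ℤ) (hε : ε = 1 ∨ ε = -1)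
    (hfaith : Function.Injective ρ) (hirr : IsIrred ρ) (hsmall : IsSmall ρ ε)
    (H : Subgroup G) (hH : H.Normal) (hHnc : ¬ H ≤ Subgroup.center G)
    (hiso : ∀ (W₁ W₂ : Submodule k V)
      (hW₁ : IsSubrep (ρ.comp H.subtype) W₁) (hW₂ : IsSubrep (ρ.comp H.subtype) W₂),
      SubIrred (ρ.comp H.subtype) W₁ → SubIrred (ρ.comp H.subtype) W₂ →
      RepIso (subRep (ρ.comp H.subtype) W₁ hW₁) (subRep (ρ.comp H.subtype) W₂ hW₂))
    (hnotirr : ¬ IsIrred (ρ.comp H.subtype)) :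
    Module.finrank k V = 4 ∧ QuadSimilitude ρ := by
  have hnt : Nontrivial V := hirr.1
  set σ := ρ.comp H.subtype with hσ
  -- a minimal irreducible H-submodule
  have htopne : (⊤ : Submodule k V) ≠ ⊥ := by
    intro h
    obtain ⟨v, hv⟩ := exists_ne (0 : V)
    apply hv
    have : v ∈ (⊤ : Submodule k V) := trivial
    rw [h, Submodule.mem_bot] at this
    exact this
  obtain ⟨W₀, -, hsub₀, hirr₀⟩ := exists_subIrred_le σ (Module.finrank k V) ⊤
    (by rw [finrank_top]) (fun g v _ => trivial) htopne
  -- isotypic hypothesis in map form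
  have hiso₀ : ∀ W : Submodule k V, IsSubrep σ W → SubIrred σ W →
      ∃ φ : ↥W₀ →ₗ[k] V, Function.Injective φ ∧ LinearMap.range φ = W ∧
        ∀ (h : ↥H) (w : ↥W₀), φ (subRep σ W₀ hsub₀ h w) = σ h (φ w) := by
    intro W hWsub hWirr
    obtain ⟨e, he⟩ := hiso W₀ W hsub₀ hWsub hirr₀ hWirr
    refine ⟨W.subtype ∘ₗ e.toLinearMap, ?_, ?_, ?_⟩
    · exact (Submodule.injective_subtype W).comp e.injective
    · rw [LinearMap.range_comp, LinearEquiv.range, Submodule.map_subtype_top]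
    · intro h w
      have h1 := he h w
      show ((e (subRep σ W₀ hsub₀ h w)) : V) = σ h ((e w : V))
      rw [h1]
      rfl
  obtain ⟨m, Φ, hΦ⟩ := decomp σ W₀ hsub₀ hiso₀
  have hΦcomp : ∀ h : ↥H, Φ.toLinearMap ∘ₗ
      (TensorProduct.map (subRep σ W₀ hsub₀ h) LinearMap.id)
      = (σ h : V →ₗ[k] V) ∘ₗ Φ.toLinearMap := by
    intro h
    apply TensorProduct.ext'
    intro w f
    simp only [LinearMap.comp_apply, TensorProduct.map_tmul, LinearMap.id_apply,
      LinearEquiv.coe_coe]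
    exact hΦ h w f
  -- m ≥ 2
  match m, Φ, hΦ, hΦcomp with
  | 0, Φ, hΦ, hΦcomp => {
    exfalso
    obtain ⟨v, hv⟩ := exists_ne (0 : V)
    apply hv
    have h1 : Φ.symm v = 0 := tensor_fin_zero_eq_zero _
    have := Φ.apply_symm_apply v
    rw [h1, map_zero] at this
    exact this.symm }
  | 1, Φ, hΦ, hΦcomp => {
    exact absurd (irred_of_fin_one σ W₀ hsub₀ hirr₀ hnt Φ hΦ) hnotirr }
  | (m + 2), Φ, hΦ, hΦcomp => ?_
  -- dim W₀ ≥ 2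
  have hntW : Nontrivial ↥W₀ := Submodule.nontrivial_iff_ne_bot.mpr hirr₀.1
  have hW : 2 ≤ Module.finrank k ↥W₀ := by
    by_contra hc
    push_neg at hc
    have hle : Module.finrank k ↥W₀ ≤ 1 := by omega
    -- every element of H acts by a scalar, hence H is central
    apply hHnc
    intro x hx
    set h : ↥H := ⟨x, hx⟩ with hh
    obtain ⟨c, hcid⟩ := scalar_of_finrank_le_one hle (subRep σ W₀ hsub₀ h)
    have hscal : ∀ v : V, ρ x v = c • v := by
      intro v
      have h1 := LinearMap.congr_fun (hΦcomp h) (Φ.symm v)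
      simp only [LinearMap.comp_apply, LinearEquiv.coe_coe, LinearEquiv.apply_symm_apply]
        at h1
      rw [hcid] at h1
      have h2 : TensorProduct.map ((c • (LinearMap.id : Module.End k ↥W₀)))
          (LinearMap.id : Module.End k (Fin (m+2) → k)) (Φ.symm v) = c • (Φ.symm v) := by
        have h3 : TensorProduct.map ((c • (LinearMap.id : Module.End k ↥W₀)))
            (LinearMap.id : Module.End k (Fin (m+2) → k))
            = c • TensorProduct.map (LinearMap.id : Module.End k ↥W₀)
              (LinearMap.id : Module.End k (Fin (m+2) → k)) := by
          rw [TensorProduct.map_smul_left]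
        rw [h3, TensorProduct.map_id]
        rfl
      rw [h2, map_smul] at h1
      have h4 : σ h v = c • Φ (Φ.symm v) := h1.symm
      rw [LinearEquiv.apply_symm_apply] at h4
      exact h4
    rw [Subgroup.mem_center_iff]
    intro g
    apply hfaith
    apply LinearMap.ext
    intro v
    rw [map_mul, map_mul]
    show ρ g (ρ x v) = ρ x (ρ g v)
    rw [hscal v, hscal (ρ g v), map_smul]
  have hU : 2 ≤ Module.finrank k (Fin (m + 2) → k) := by
    rw [Module.finrank_fin_fun]
    omega
  have hfac := fun g => rho_factor ρ H hH W₀ hsub₀ hirr₀ hiso₀ Φ hΦcomp g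
  exact model_main ρ hirr ε hε hsmall hW hU Φ hfac



end SmallRep
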